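/- arXiv:2204.09478 — 9 statements merged into one kernel-verified Lean document; each statement's English description precedes it below -/
import Mathlib

section
/- Let G be a nontrivial compact Hausdorff topological group (G ≠ {e}). Then the convolution semigroup P(G) of regular Borel probability measures on G is not algebraically (von Neumann) regular: there exists μ ∈ P(G) such that no ν ∈ P(G) satisfies μ ∗ ν ∗ μ = μ. -/
open MeasureTheory
open scoped MeasureTheory ENNReal NNReal

section Aux

variable {G : Type*} [Group G] [TopologicalSpace G] [IsTopologicalGroup G]
    [CompactSpace G] [T2Space G] [MeasurableSpace G] [BorelSpace G]

/-- Value of `c • δ_x + d • δ_y` on an arbitrary set. -/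
lemma dirac2_apply (c d : ℝ≥0∞) (x y : G) (s : Set G) :
    (c • Measure.dirac x + d • Measure.dirac y) s
      = c * s.indicator 1 x + d * s.indicator 1 y := by
  simp [Measure.dirac_apply]

lemma dirac2_congr {c d : ℝ≥0∞} {x y : G} {s t : Set G}
    (hx : x ∈ s ↔ x ∈ t) (hy : y ∈ s ↔ y ∈ t) :
    (c • Measure.dirac x + d • Measure.dirac y) s
      = (c • Measure.dirac x + d • Measure.dirac y) t := by
  rw [dirac2_apply, dirac2_apply]
  congr 2
  · by_cases h : x ∈ s
    · rw [Set.indicator_of_mem h, Set.indicator_of_mem (hx.1 h)]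
    · rw [Set.indicator_of_notMem h, Set.indicator_of_notMem (fun h' => h (hx.2 h'))]
  · by_cases h : y ∈ s
    · rw [Set.indicator_of_mem h, Set.indicator_of_mem (hy.1 h)]
    · rw [Set.indicator_of_notMem h, Set.indicator_of_notMem (fun h' => h (hy.2 h'))]

lemma dirac2_conv_apply {a : G} (ha : a ≠ 1) (c d : ℝ≥0∞)
    (ν : Measure G) [SFinite ν]
    [SFinite (c • Measure.dirac (1 : G) + d • Measure.dirac a)]
    {s : Set G} (hs : MeasurableSet s) :
    ((c • Measure.dirac (1 : G) + d • Measure.dirac a) ∗ₘ ν) s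
      = c * ν s + d * ν ((a * ·) ⁻¹' s) := by
  classical
  have ha1 : (1 : G) ≠ a := Ne.symm ha
  set μ : Measure G := c • Measure.dirac (1 : G) + d • Measure.dirac a with hμ
  set g : G × G → G := fun p => if p.1 = a then a * p.2 else p.2 with hgdef
  have hg : Measurable g := by
    have hset : MeasurableSet {p : G × G | p.1 = a} :=
      measurable_fst (measurableSet_singleton a)
    exact Measurable.ite hset ((measurable_const_mul a).comp measurable_snd) measurable_snd
  have hnull : (μ.prod ν) (({1, a} : Set G)ᶜ ×ˢ (Set.univ : Set G)) = 0 := by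
    rw [Measure.prod_prod]
    have h0 : μ (({1, a} : Set G)ᶜ) = 0 := by
      rw [hμ, dirac2_apply]
      simp
    rw [h0, zero_mul]
  have hfg : (fun p : G × G => p.1 * p.2) =ᵐ[μ.prod ν] g := by
    refine ae_iff.mpr (measure_mono_null ?_ hnull)
    intro p hp
    simp only [Set.mem_setOf_eq] at hp
    refine ⟨fun hmem => hp ?_, Set.mem_univ _⟩
    rcases hmem with h1 | h2
    · simp [hgdef, h1, ha1]
    · simp only [Set.mem_singleton_iff] at h2
      simp [hgdef, h2]
  have key : μ ∗ₘ ν = (μ.prod ν).map g := Measure.map_congr hfg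
  have h1pre : (Prod.mk (1 : G)) ⁻¹' (g ⁻¹' s) = s := by
    ext y
    simp [hgdef, ha1]
  have hapre : (Prod.mk a) ⁻¹' (g ⁻¹' s) = (a * ·) ⁻¹' s := by
    ext y
    simp [hgdef]
  rw [key, Measure.map_apply hg hs, Measure.prod_apply (hg hs), hμ, lintegral_add_measure,
    lintegral_smul_measure, lintegral_smul_measure, lintegral_dirac, lintegral_dirac,
    h1pre, hapre, smul_eq_mul, smul_eq_mul]

lemma conv_dirac2_apply {a : G} (ha : a ≠ 1) (c d : ℝ≥0∞)
    (ρ : Measure G) [SFinite ρ]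
    [SFinite (c • Measure.dirac (1 : G) + d • Measure.dirac a)]
    {s : Set G} (hs : MeasurableSet s) :
    (ρ ∗ₘ (c • Measure.dirac (1 : G) + d • Measure.dirac a)) s
      = c * ρ s + d * ρ ((· * a) ⁻¹' s) := by
  classical
  have ha1 : (1 : G) ≠ a := Ne.symm ha
  set μ : Measure G := c • Measure.dirac (1 : G) + d • Measure.dirac a with hμ
  set g : G × G → G := fun p => if p.2 = a then p.1 * a else p.1 with hgdef
  have hg : Measurable g := by
    have hset : MeasurableSet {p : G × G | p.2 = a} :=
      measurable_snd (measurableSet_singleton a)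
    exact Measurable.ite hset ((measurable_mul_const a).comp measurable_fst) measurable_fst
  have hnull : (ρ.prod μ) ((Set.univ : Set G) ×ˢ ({1, a} : Set G)ᶜ) = 0 := by
    rw [Measure.prod_prod]
    have h0 : μ (({1, a} : Set G)ᶜ) = 0 := by
      rw [hμ, dirac2_apply]
      simp
    rw [h0, mul_zero]
  have hfg : (fun p : G × G => p.1 * p.2) =ᵐ[ρ.prod μ] g := by
    refine ae_iff.mpr (measure_mono_null ?_ hnull)
    intro p hp
    simp only [Set.mem_setOf_eq] at hp
    refine ⟨Set.mem_univ _, fun hmem => hp ?_⟩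
    rcases hmem with h1 | h2
    · simp [hgdef, h1, ha1]
    · simp only [Set.mem_singleton_iff] at h2
      simp [hgdef, h2]
  have key : ρ ∗ₘ μ = (ρ.prod μ).map g := Measure.map_congr hfg
  have h1pre : (fun x => (x, (1 : G))) ⁻¹' (g ⁻¹' s) = s := by
    ext y
    simp [hgdef, ha1]
  have hapre : (fun x => (x, a)) ⁻¹' (g ⁻¹' s) = (· * a) ⁻¹' s := by
    ext y
    simp [hgdef]
  rw [key, Measure.map_apply hg hs, Measure.prod_apply_symm (hg hs), hμ,
    lintegral_add_measure, lintegral_smul_measure, lintegral_smul_measure,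
    lintegral_dirac, lintegral_dirac, h1pre, hapre, smul_eq_mul, smul_eq_mul]

lemma dirac2_regular (c d : ℝ≥0∞) (hc : c ≠ ⊤) (hd : d ≠ ⊤) (x y : G) :
    (c • Measure.dirac x + d • Measure.dirac y).Regular := by
  set μ : Measure G := c • Measure.dirac x + d • Measure.dirac y with hμ
  have hfin : IsFiniteMeasure μ := by
    constructor
    rw [hμ, dirac2_apply]
    exact ENNReal.add_lt_top.2 ⟨ENNReal.mul_lt_top hc.lt_top (by simp),
      ENNReal.mul_lt_top hd.lt_top (by simp)⟩
  have hfinset : (({x, y} : Set G)).Finite := (Set.finite_singleton y).insert x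
  have houter : μ.OuterRegular := by
    constructor
    intro A _ r hr
    refine ⟨(({x, y} : Set G) \ A)ᶜ, fun z hz h2 => h2.2 hz, ?_, ?_⟩
    · exact ((hfinset.diff (t := A)).isClosed).isOpen_compl
    · have hval : μ ((({x, y} : Set G) \ A)ᶜ) = μ A := by
        rw [hμ]
        refine dirac2_congr ?_ ?_ <;>
          · simp only [Set.mem_compl_iff, Set.mem_diff, Set.mem_insert_iff,
              Set.mem_singleton_iff, not_and, not_not]
            tauto
      rw [hval]; exact hr
  refine ⟨?_⟩
  intro U hU r hr
  refine ⟨({x, y} : Set G) ∩ U, Set.inter_subset_right, ?_, ?_⟩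
  · exact (hfinset.inter_of_left U).isCompact
  · have hval : μ (({x, y} : Set G) ∩ U) = μ U := by
      rw [hμ]
      refine dirac2_congr ?_ ?_ <;>
        · simp only [Set.mem_inter_iff, Set.mem_insert_iff, Set.mem_singleton_iff]
          tauto
    rw [hval]; exact hr

end Aux

/-- For a nontrivial compact Hausdorff topological group `G`, the convolution semigroup
of regular Borel probability measures on `G` is not algebraically (von Neumann) regular:
some regular probability measure `μ` admits no regular probability measure `ν` with
`μ ∗ₘ ν ∗ₘ μ = μ`. -/
theorem pg_not_regular {G : Type*} [Group G] [TopologicalSpace G] [IsTopologicalGroup G]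
    [CompactSpace G] [T2Space G] [MeasurableSpace G] [BorelSpace G]
    [Nontrivial G] :
    ∃ μ : Measure G, IsProbabilityMeasure μ ∧ μ.Regular ∧
      ∀ ν : Measure G, IsProbabilityMeasure ν → ν.Regular → (μ ∗ₘ ν) ∗ₘ μ ≠ μ := by
  obtain ⟨a, ha⟩ : ∃ a : G, a ≠ 1 := exists_ne 1
  set c : ℝ≥0∞ := ((3 / 4 : ℝ≥0) : ℝ≥0∞) with hc
  set d : ℝ≥0∞ := ((1 / 4 : ℝ≥0) : ℝ≥0∞) with hd
  set μ : Measure G := c • Measure.dirac (1 : G) + d • Measure.dirac a with hμ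
  have hprob : IsProbabilityMeasure μ := by
    constructor
    rw [hμ, dirac2_apply]
    simp only [Set.indicator_of_mem (Set.mem_univ _), Pi.one_apply, mul_one]
    rw [hc, hd, ← ENNReal.coe_add]
    rw [show (3 / 4 + 1 / 4 : ℝ≥0) = 1 by rw [← NNReal.coe_inj]; push_cast; norm_num]
    exact ENNReal.coe_one
  haveI := hprob
  haveI hsf : SFinite (c • Measure.dirac (1 : G) + d • Measure.dirac a) := by
    rw [← hμ]; infer_instance
  have hcne : c ≠ ⊤ := by rw [hc]; exact ENNReal.coe_ne_top
  have hdne : d ≠ ⊤ := by rw [hd]; exact ENNReal.coe_ne_top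
  refine ⟨μ, hprob, hμ ▸ dirac2_regular c d hcne hdne 1 a, ?_⟩
  intro ν hν _ heq
  haveI := hν
  -- Evaluate both sides on {1}.
  have h1meas : MeasurableSet ({1} : Set G) := measurableSet_singleton 1
  have hpreL : ∀ b : G, ((a * ·) ⁻¹' ({b} : Set G)) = {a⁻¹ * b} := by
    intro b; ext z; simp [eq_inv_mul_iff_mul_eq]
  have hpreR : ((· * a) ⁻¹' ({1} : Set G)) = {a⁻¹} := by
    ext z
    simp only [Set.mem_preimage, Set.mem_singleton_iff]
    constructor
    · exact fun h => eq_inv_of_mul_eq_one_left h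
    · intro h; rw [h]; exact inv_mul_cancel a
  have hainv : ((a * ·) ⁻¹' ({1} : Set G)) = {a⁻¹} := by rw [hpreL 1, mul_one]
  have hL1 : (μ ∗ₘ ν) ({1} : Set G) = c * ν {1} + d * ν {a⁻¹} := by
    rw [hμ, dirac2_conv_apply ha c d ν h1meas, hainv]
  have hL2 : (μ ∗ₘ ν) ({a⁻¹} : Set G) = c * ν {a⁻¹} + d * ν {a⁻¹ * a⁻¹} := by
    rw [hμ, dirac2_conv_apply ha c d ν (measurableSet_singleton _), hpreL a⁻¹]
  have hLHS : ((μ ∗ₘ ν) ∗ₘ μ) ({1} : Set G)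
      = c * (c * ν {1} + d * ν {a⁻¹}) + d * (c * ν {a⁻¹} + d * ν {a⁻¹ * a⁻¹}) := by
    rw [hμ, conv_dirac2_apply ha c d (μ ∗ₘ ν) h1meas, hpreR]
    rw [hL1, hL2]
  have hRHS : μ ({1} : Set G) = c := by
    rw [hμ, dirac2_apply]
    have h1 : (1 : G) ∈ ({1} : Set G) := rfl
    have h2 : a ∉ ({1} : Set G) := ha
    rw [Set.indicator_of_mem h1, Set.indicator_of_notMem h2]
    simp
  -- the probability bound
  have hsum : ν {1} + ν {a⁻¹} ≤ 1 := by
    have hdis : Disjoint ({1} : Set G) {a⁻¹} := by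
      rw [Set.disjoint_singleton]
      intro h
      exact ha (by rw [← inv_inv a, ← h, inv_one])
    rw [← measure_union hdis (measurableSet_singleton _)]
    exact prob_le_one
  have hr1 : ν {a⁻¹ * a⁻¹} ≤ 1 := prob_le_one
  -- expand and bound
  have hcc : c * d + d * c ≤ c * c := by
    rw [hc, hd, ← ENNReal.coe_mul, ← ENNReal.coe_mul, ← ENNReal.coe_mul,
      ← ENNReal.coe_add, ENNReal.coe_le_coe, ← NNReal.coe_le_coe]
    push_cast
    norm_num
  have hbound : c * (c * ν {1} + d * ν {a⁻¹}) + d * (c * ν {a⁻¹} + d * ν {a⁻¹ * a⁻¹})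
      ≤ ((10 / 16 : ℝ≥0) : ℝ≥0∞) := by
    calc c * (c * ν {1} + d * ν {a⁻¹}) + d * (c * ν {a⁻¹} + d * ν {a⁻¹ * a⁻¹})
        = (c * c) * ν {1} + (c * d + d * c) * ν {a⁻¹} + (d * d) * ν {a⁻¹ * a⁻¹} := by
          ring
      _ ≤ (c * c) * ν {1} + (c * c) * ν {a⁻¹} + (d * d) * 1 := by
          gcongr
      _ = (c * c) * (ν {1} + ν {a⁻¹}) + d * d := by ring
      _ ≤ (c * c) * 1 + d * d := by gcongr
      _ = ((10 / 16 : ℝ≥0) : ℝ≥0∞) := by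
          rw [mul_one, hc, hd, ← ENNReal.coe_mul, ← ENNReal.coe_mul, ← ENNReal.coe_add,
            ENNReal.coe_inj, ← NNReal.coe_inj]
          push_cast
          norm_num
  have hfinal : c ≤ ((10 / 16 : ℝ≥0) : ℝ≥0∞) := by
    rw [← hRHS]
    conv_lhs => rw [← heq]
    rw [hLHS]
    exact hbound
  rw [hc, ENNReal.coe_le_coe, ← NNReal.coe_le_coe] at hfinal
  push_cast at hfinal
  norm_num at hfinal
end

section
/- Let G be a compact Hausdorff topological group with identity e, and let a ∈ G satisfy a² ≠ e. Then the probability measure μ = (1/2)δ_e + (1/2)δ_a has no generalized inverse in P(G): there is no regular Borel probability measure ν on G with μ ∗ ν ∗ μ = μ. -/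
open MeasureTheory
open scoped MeasureTheory ENNReal

lemma aux_smul_prod {α β : Type*} [MeasurableSpace α] [MeasurableSpace β]
    (c : ℝ≥0∞) (hc : c ≠ ∞) (μ : Measure α) (ν : Measure β)
    [IsFiniteMeasure μ] [SigmaFinite ν] :
    (c • μ).prod ν = c • (μ.prod ν) := by
  haveI : IsFiniteMeasure (c • μ) := μ.smul_finite hc
  refine Measure.prod_eq (μ := c • μ) (ν := ν) fun s t hs ht => ?_
  simp only [Measure.smul_apply, Measure.prod_prod, smul_eq_mul]
  ring

lemma aux_prod_smul {α β : Type*} [MeasurableSpace α] [MeasurableSpace β]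
    (c : ℝ≥0∞) (hc : c ≠ ∞) (μ : Measure α) (ν : Measure β)
    [SigmaFinite μ] [IsFiniteMeasure ν] :
    μ.prod (c • ν) = c • (μ.prod ν) := by
  haveI : IsFiniteMeasure (c • ν) := ν.smul_finite hc
  refine Measure.prod_eq (μ := μ) (ν := c • ν) fun s t hs ht => ?_
  simp only [Measure.smul_apply, Measure.prod_prod, smul_eq_mul]
  ring

/-- If `a² ≠ e` in a compact Hausdorff topological group `G`, then
`μ = (1/2) δ_e + (1/2) δ_a` has no generalized inverse in `P(G)`. -/
theorem half_dirac_no_generalized_inverse {G : Type*} [Group G] [TopologicalSpace G]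
    [IsTopologicalGroup G] [CompactSpace G] [T2Space G] [MeasurableSpace G] [BorelSpace G]
    (a : G) (ha : a ^ 2 ≠ 1)
    (μ : Measure G)
    (hμ : μ = (2⁻¹ : ℝ≥0∞) • Measure.dirac (1 : G) + (2⁻¹ : ℝ≥0∞) • Measure.dirac a) :
    ¬ ∃ ν : Measure G, IsProbabilityMeasure ν ∧ ν.Regular ∧ (μ ∗ₘ ν) ∗ₘ μ = μ := by
  rintro ⟨ν, hprob, hreg, heq⟩
  classical
  have h2 : (2⁻¹ : ℝ≥0∞) ≠ ∞ := by simp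
  have ha1 : a ≠ 1 := fun h => ha (by simp [h])
  have haa : a⁻¹ * a⁻¹ ≠ 1 := by
    intro h
    apply ha
    have h2' : (a * a)⁻¹ = 1 := by rw [mul_inv_rev]; exact h
    rw [sq]
    simpa using congrArg (·⁻¹) h2'
  have hainv : a ≠ a⁻¹ := by
    intro h
    apply ha
    rw [sq]
    nth_rewrite 2 [h]
    simp
  haveI hfd1 : IsFiniteMeasure ((2⁻¹ : ℝ≥0∞) • Measure.dirac (1 : G)) :=
    (Measure.dirac (1 : G)).smul_finite h2
  haveI hfda : IsFiniteMeasure ((2⁻¹ : ℝ≥0∞) • Measure.dirac a) :=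
    (Measure.dirac a).smul_finite h2
  haveI : IsFiniteMeasure μ := by rw [hμ]; infer_instance
  have hμnull : μ ({1, a}ᶜ : Set G) = 0 := by
    rw [hμ]
    simp [Measure.dirac_apply, Set.indicator_apply]
  -- the measurable substitute for multiplication on the left
  set g : G × G → G := fun p => if p.1 = a then a * p.2 else p.2 with hgdef
  have hgmeas : Measurable g := by
    apply Measurable.ite (measurable_fst (measurableSet_singleton a))
    · exact ((continuous_mul_left a).measurable).comp measurable_snd
    · exact measurable_snd
  -- the measurable substitute for multiplication on the right
  set h : G × G → G := fun p => if p.2 = a then p.1 * a else p.1 with hhdef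
  have hhmeas : Measurable h := by
    apply Measurable.ite (measurable_snd (measurableSet_singleton a))
    · exact ((continuous_mul_right a).measurable).comp measurable_fst
    · exact measurable_fst
  -- first convolution: μ ∗ₘ ν = ½ ν + ½ (a•ν)
  have hX : μ ∗ₘ ν = (2⁻¹ : ℝ≥0∞) • ν + (2⁻¹ : ℝ≥0∞) • ν.map (a * ·) := by
    have hae : (fun p : G × G => p.1 * p.2) =ᵐ[μ.prod ν] g := by
      have hzero : (μ.prod ν) (({1, a}ᶜ : Set G) ×ˢ (Set.univ : Set G)) = 0 := by
        rw [Measure.prod_prod, hμnull, zero_mul]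
      refine measure_mono_null ?_ hzero
      intro p hp
      simp only [Set.mem_setOf_eq] at hp
      refine ⟨?_, Set.mem_univ _⟩
      intro hp1
      rcases hp1 with h1 | h1
      · exact hp (by simp [hgdef, h1, Ne.symm ha1])
      · have h1' : p.1 = a := h1
        exact hp (by simp [hgdef, h1'])
    have hprod : μ.prod ν
        = (2⁻¹ : ℝ≥0∞) • (ν.map (Prod.mk (1:G))) + (2⁻¹ : ℝ≥0∞) • (ν.map (Prod.mk a)) := by
      rw [hμ, Measure.add_prod, aux_smul_prod _ h2, aux_smul_prod _ h2,
        Measure.dirac_prod, Measure.dirac_prod]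
    show Measure.map _ (μ.prod ν) = _
    rw [Measure.map_congr hae, hprod, Measure.map_add _ _ hgmeas,
      Measure.map_smul, Measure.map_smul,
      Measure.map_map hgmeas measurable_prodMk_left,
      Measure.map_map hgmeas measurable_prodMk_left]
    have hg1 : g ∘ Prod.mk (1:G) = fun x => x := by
      funext x
      simp only [hgdef, Function.comp_apply]
      rw [if_neg (Ne.symm ha1)]
    have hga : g ∘ Prod.mk a = (a * ·) := by
      funext x
      simp [hgdef]
    rw [hg1, hga, Measure.map_id']
  -- second convolution
  have hY : (μ ∗ₘ ν) ∗ₘ μ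
      = (2⁻¹ : ℝ≥0∞) • (μ ∗ₘ ν) + (2⁻¹ : ℝ≥0∞) • (μ ∗ₘ ν).map (· * a) := by
    haveI : IsFiniteMeasure (μ ∗ₘ ν) := by
      rw [hX]
      haveI := ν.smul_finite h2
      haveI := (ν.map (a * ·)).smul_finite h2
      infer_instance
    have hae : (fun p : G × G => p.1 * p.2) =ᵐ[(μ ∗ₘ ν).prod μ] h := by
      have hzero : ((μ ∗ₘ ν).prod μ) ((Set.univ : Set G) ×ˢ ({1, a}ᶜ : Set G)) = 0 := by
        rw [Measure.prod_prod, hμnull, mul_zero]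
      refine measure_mono_null ?_ hzero
      intro p hp
      simp only [Set.mem_setOf_eq] at hp
      refine ⟨Set.mem_univ _, ?_⟩
      intro hp2
      rcases hp2 with h1 | h1
      · exact hp (by simp [hhdef, h1, Ne.symm ha1])
      · have h1' : p.2 = a := h1
        exact hp (by simp [hhdef, h1'])
    have hprod : (μ ∗ₘ ν).prod μ
        = (2⁻¹ : ℝ≥0∞) • ((μ ∗ₘ ν).map (fun x => (x, (1:G))))
          + (2⁻¹ : ℝ≥0∞) • ((μ ∗ₘ ν).map (fun x => (x, a))) := by
      nth_rewrite 2 [hμ]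
      rw [Measure.prod_add, aux_prod_smul _ h2, aux_prod_smul _ h2,
        Measure.prod_dirac, Measure.prod_dirac]
    show Measure.map _ ((μ ∗ₘ ν).prod μ) = _
    rw [Measure.map_congr hae, hprod, Measure.map_add _ _ hhmeas,
      Measure.map_smul, Measure.map_smul,
      Measure.map_map hhmeas measurable_prodMk_right,
      Measure.map_map hhmeas measurable_prodMk_right]
    have hh1 : h ∘ (fun x : G => (x, (1:G))) = fun x => x := by
      funext x
      simp only [hhdef, Function.comp_apply]
      rw [if_neg (Ne.symm ha1)]
    have hha : h ∘ (fun x : G => (x, a)) = (· * a) := by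
      funext x
      simp [hhdef]
    rw [hh1, hha, Measure.map_id']
  -- pointwise evaluation
  have hmapl : ∀ y : G, (ν.map (a * ·)) {y} = ν {a⁻¹ * y} := by
    intro y
    rw [Measure.map_apply (continuous_mul_left a).measurable (measurableSet_singleton y),
      Set.preimage_mul_left_singleton]
  have hXapp : ∀ y : G, (μ ∗ₘ ν) {y} = 2⁻¹ * ν {y} + 2⁻¹ * ν {a⁻¹ * y} := by
    intro y
    rw [hX]
    simp [hmapl]
  have hmapr : ∀ y : G, ((μ ∗ₘ ν).map (· * a)) {y} = (μ ∗ₘ ν) {y * a⁻¹} := by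
    intro y
    rw [Measure.map_apply (continuous_mul_right a).measurable (measurableSet_singleton y),
      Set.preimage_mul_right_singleton]
  have key : ∀ x : G, ((μ ∗ₘ ν) ∗ₘ μ) {x}
      = 2⁻¹ * (2⁻¹ * ν {x} + 2⁻¹ * ν {a⁻¹ * x})
        + 2⁻¹ * (2⁻¹ * ν {x * a⁻¹} + 2⁻¹ * ν {a⁻¹ * (x * a⁻¹)}) := by
    intro x
    rw [hY]
    simp [hmapr, hXapp]
  -- μ on singletons
  have hμ1 : μ {(1 : G)} = 2⁻¹ := by
    rw [hμ]
    simp [Measure.dirac_apply, Set.indicator, ha1]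
  have hμa : μ {a} = 2⁻¹ := by
    rw [hμ]
    simp [Measure.dirac_apply, Set.indicator, ha1.symm]
  -- the two equations
  have E1 : (2⁻¹ : ℝ≥0∞) * (2⁻¹ * ν {(1:G)} + 2⁻¹ * ν {a⁻¹})
      + 2⁻¹ * (2⁻¹ * ν {a⁻¹} + 2⁻¹ * ν {a⁻¹ * a⁻¹}) = 2⁻¹ := by
    have hk := key 1
    rw [heq, hμ1] at hk
    simpa using hk.symm
  have E2 : (2⁻¹ : ℝ≥0∞) * (2⁻¹ * ν {a} + 2⁻¹ * ν {(1:G)})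
      + 2⁻¹ * (2⁻¹ * ν {(1:G)} + 2⁻¹ * ν {a⁻¹}) = 2⁻¹ := by
    have hk := key a
    rw [heq, hμa] at hk
    simpa using hk.symm
  set p1 := ν {(1 : G)} with hp1def
  set p2 := ν {a⁻¹} with hp2def
  set p3 := ν {a⁻¹ * a⁻¹} with hp3def
  set p4 := ν {a} with hp4def
  have hquarter : ∀ x y : ℝ≥0∞,
      (2⁻¹ : ℝ≥0∞) * (2⁻¹ * x + 2⁻¹ * y) = 4⁻¹ * (x + y) := by
    intro x y
    rw [show (4 : ℝ≥0∞)⁻¹ = 2⁻¹ * 2⁻¹ by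
      rw [← ENNReal.mul_inv (by norm_num) (by norm_num)]; norm_num]
    ring
  have unquarter : ∀ s : ℝ≥0∞, (4⁻¹ : ℝ≥0∞) * s = 2⁻¹ → s = 2 := by
    intro s hs
    have h4 := congrArg (fun t => (4 : ℝ≥0∞) * t) hs
    change (4 : ℝ≥0∞) * (4⁻¹ * s) = 4 * 2⁻¹ at h4
    rw [← mul_assoc, ENNReal.mul_inv_cancel (by norm_num) (by norm_num),
      one_mul] at h4
    rw [h4]
    rw [show (4 : ℝ≥0∞) = 2 * 2 by norm_num, mul_assoc,
      ENNReal.mul_inv_cancel (by norm_num) (by norm_num), mul_one]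
  have E1' : p1 + p2 + (p2 + p3) = 2 := by
    apply unquarter
    rw [mul_add, ← hquarter, ← hquarter]
    exact E1
  have E2' : p4 + p1 + (p1 + p2) = 2 := by
    apply unquarter
    rw [mul_add, ← hquarter, ← hquarter]
    exact E2
  -- bounds
  have hd23 : Disjoint ({a⁻¹} : Set G) {a⁻¹ * a⁻¹} := by
    rw [Set.disjoint_singleton]
    intro hcontra
    exact ha1 (by simpa using (mul_left_cancel (a := a⁻¹) (by simpa using hcontra)).symm)
  have hd123 : Disjoint ({(1:G)} : Set G) ({a⁻¹} ∪ {a⁻¹ * a⁻¹}) := by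
    rw [Set.disjoint_singleton_left]
    intro hcontra
    rcases hcontra with hc | hc
    · exact ha1 (by simpa using congrArg (·⁻¹) (Set.mem_singleton_iff.mp hc).symm)
    · exact haa (Set.mem_singleton_iff.mp hc).symm
  have hsum3 : p1 + (p2 + p3) ≤ 1 := by
    rw [hp1def, hp2def, hp3def,
      ← measure_union hd23 (measurableSet_singleton _),
      ← measure_union hd123 ((measurableSet_singleton _).union (measurableSet_singleton _))]
    exact prob_le_one
  have hsum2 : p4 + p2 ≤ 1 := by
    rw [hp4def, hp2def,
      ← measure_union (by simpa [Set.disjoint_singleton] using hainv)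
        (measurableSet_singleton _)]
    exact prob_le_one
  -- derive p2 = 1
  have hp2ge : (1 : ℝ≥0∞) ≤ p2 := by
    have hle : (2 : ℝ≥0∞) ≤ 1 + p2 := by
      calc (2 : ℝ≥0∞) = p1 + p2 + (p2 + p3) := E1'.symm
        _ = p2 + (p1 + (p2 + p3)) := by ring
        _ ≤ p2 + 1 := add_le_add_right hsum3 p2
        _ = 1 + p2 := by ring
    exact (ENNReal.add_le_add_iff_left (by norm_num : (1:ℝ≥0∞) ≠ ∞)).mp
      (by rw [show (1:ℝ≥0∞) + 1 = 2 by norm_num]; exact hle)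
  have hp2eq : p2 = 1 := le_antisymm prob_le_one hp2ge
  -- derive p1 = 0
  have hp1eq : p1 = 0 := by
    have hle : (1 : ℝ≥0∞) + (p1 + p3) ≤ 1 + 0 := by
      calc (1 : ℝ≥0∞) + (p1 + p3) = p1 + (p2 + p3) := by rw [hp2eq]; ring
        _ ≤ 1 := hsum3
        _ = 1 + 0 := by rw [add_zero]
    have h0 : p1 + p3 ≤ 0 :=
      (ENNReal.add_le_add_iff_left (by norm_num : (1:ℝ≥0∞) ≠ ∞)).mp hle
    exact le_antisymm (le_trans le_self_add h0) zero_le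
  -- derive p4 = 1
  have hp4eq : p4 = 1 := by
    have heq1 : (1 : ℝ≥0∞) + p4 = 1 + 1 := by
      calc (1 : ℝ≥0∞) + p4 = p4 + p1 + (p1 + p2) := by rw [hp1eq, hp2eq]; ring
        _ = 2 := E2'
        _ = 1 + 1 := by norm_num
    exact (ENNReal.add_right_inj (by norm_num : (1:ℝ≥0∞) ≠ ∞)).mp heq1
  -- contradiction
  rw [hp4eq, hp2eq] at hsum2
  norm_num at hsum2
end

section
/- Let G be a compact Hausdorff topological group with identity e and let g ∈ G. The probability measure μ = (1/2)(δ_e + δ_g) has a generalized inverse in P(G) (i.e., there exists ν ∈ P(G) with μ ∗ ν ∗ μ = μ) if and only if g² = e. -/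
open MeasureTheory
open scoped MeasureTheory ENNReal

section Aux

variable {G : Type*} [Group G] [TopologicalSpace G]
    [IsTopologicalGroup G] [CompactSpace G] [T2Space G] [MeasurableSpace G] [BorelSpace G]

omit [Group G] [TopologicalSpace G] [IsTopologicalGroup G] [CompactSpace G] [T2Space G]
  [BorelSpace G] in
lemma smul_prod' (c : ℝ≥0∞) (μ ν : Measure G) [SFinite ν] :
    (c • μ).prod ν = c • μ.prod ν := by
  ext s hs
  rw [Measure.prod_apply hs, Measure.smul_apply, Measure.prod_apply hs,
    lintegral_smul_measure, smul_eq_mul]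

omit [Group G] [TopologicalSpace G] [IsTopologicalGroup G] [CompactSpace G] [T2Space G]
  [BorelSpace G] in
lemma prod_smul' (c : ℝ≥0∞) (μ ν : Measure G) [SFinite ν] :
    μ.prod (c • ν) = c • μ.prod ν := by
  ext s hs
  rw [Measure.prod_apply hs, Measure.smul_apply, Measure.prod_apply hs, smul_eq_mul,
    ← lintegral_const_mul c (measurable_measure_prodMk_left hs)]
  simp

/-- map commutes with addition given AE-measurability wrt each summand. -/
lemma map_add₀ {α β : Type*} [MeasurableSpace α] [MeasurableSpace β]
    {μ ν : Measure α} {f : α → β} (hμ : AEMeasurable f μ) (hν : AEMeasurable f ν) :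
    Measure.map f (μ + ν) = Measure.map f μ + Measure.map f ν := by
  have hsum : AEMeasurable f (μ + ν) := hμ.add_measure hν
  have h1 : f =ᵐ[μ + ν] hsum.mk f := hsum.ae_eq_mk
  have h2 : f =ᵐ[μ] hsum.mk f := by
    refine Filter.EventuallyEq.filter_mono h1 (ae_mono ?_)
    exact Measure.le_add_right le_rfl
  have h3 : f =ᵐ[ν] hsum.mk f := by
    refine Filter.EventuallyEq.filter_mono h1 (ae_mono ?_)
    exact Measure.le_add_left le_rfl
  rw [Measure.map_congr h1, Measure.map_congr h2, Measure.map_congr h3,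
    Measure.map_add _ _ hsum.measurable_mk]

lemma aemeasurable_dirac' {α β : Type*} [MeasurableSpace α] [MeasurableSpace β]
    [MeasurableSingletonClass α] (f : α → β) (a : α) :
    AEMeasurable f (Measure.dirac a) := by
  refine ⟨fun _ => f a, measurable_const, ?_⟩
  simp [Filter.EventuallyEq, ae_dirac_eq]

lemma map_dirac₀ {α β : Type*} [MeasurableSpace α] [MeasurableSpace β]
    [MeasurableSingletonClass α] (f : α → β) (a : α) :
    Measure.map f (Measure.dirac a) = Measure.dirac (f a) := by
  have h : f =ᵐ[Measure.dirac a] (fun _ => f a) := by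
    simp [Filter.EventuallyEq, ae_dirac_eq]
  rw [Measure.map_congr h, Measure.map_const]
  simp

omit [TopologicalSpace G] [IsTopologicalGroup G] [CompactSpace G] [T2Space G] [BorelSpace G] in
/-- `δ_x ∗ₘ ν = map (x * ·) ν` (no joint measurability of multiplication required). -/
lemma dirac_mconv' [MeasurableSingletonClass G] (x : G)
    (hx : Measurable fun y : G => x * y) (ν : Measure G) [SFinite ν] :
    Measure.dirac x ∗ₘ ν = Measure.map (fun y => x * y) ν := by
  unfold Measure.mconv
  rw [Measure.dirac_prod,
    AEMeasurable.map_map_of_aemeasurable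
      (((measurableEmbedding_prodMk_left x).aemeasurable_map_iff).mpr hx.aemeasurable)
      measurable_prodMk_left.aemeasurable]
  rfl

omit [TopologicalSpace G] [IsTopologicalGroup G] [CompactSpace G] [T2Space G] [BorelSpace G] in
lemma mconv_dirac' [MeasurableSingletonClass G] (x : G)
    (hx : Measurable fun y : G => y * x) (μ : Measure G) [SFinite μ] :
    μ ∗ₘ Measure.dirac x = Measure.map (fun y => y * x) μ := by
  unfold Measure.mconv
  rw [Measure.prod_dirac,
    AEMeasurable.map_map_of_aemeasurable
      (((measurableEmbedding_prod_mk_right x).aemeasurable_map_iff).mpr hx.aemeasurable)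
      measurable_prodMk_right.aemeasurable]
  rfl


omit [TopologicalSpace G] [IsTopologicalGroup G] [CompactSpace G] [T2Space G] [BorelSpace G] in
lemma dirac_comb_mconv [MeasurableSingletonClass G]
    (hm : ∀ x : G, Measurable fun y : G => x * y)
    (c d : ℝ≥0∞) (x y : G) (ν : Measure G) [SFinite ν] :
    (c • Measure.dirac x + d • Measure.dirac y) ∗ₘ ν
      = c • Measure.map (fun z => x * z) ν + d • Measure.map (fun z => y * z) ν := by
  unfold Measure.mconv
  rw [Measure.add_prod, smul_prod', smul_prod', Measure.dirac_prod, Measure.dirac_prod,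
    map_add₀, Measure.map_smul, Measure.map_smul,
    AEMeasurable.map_map_of_aemeasurable
      (((measurableEmbedding_prodMk_left x).aemeasurable_map_iff).mpr (hm x).aemeasurable)
      measurable_prodMk_left.aemeasurable,
    AEMeasurable.map_map_of_aemeasurable
      (((measurableEmbedding_prodMk_left y).aemeasurable_map_iff).mpr (hm y).aemeasurable)
      measurable_prodMk_left.aemeasurable]
  · rfl
  · exact (((measurableEmbedding_prodMk_left x).aemeasurable_map_iff).mpr
      (hm x).aemeasurable).smul_measure c
  · exact (((measurableEmbedding_prodMk_left y).aemeasurable_map_iff).mpr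
      (hm y).aemeasurable).smul_measure d

omit [TopologicalSpace G] [IsTopologicalGroup G] [CompactSpace G] [T2Space G] [BorelSpace G] in
lemma mconv_dirac_comb [MeasurableSingletonClass G]
    (hm : ∀ x : G, Measurable fun y : G => y * x)
    (c d : ℝ≥0∞) (x y : G) (ν : Measure G) [SFinite ν] :
    ν ∗ₘ (c • Measure.dirac x + d • Measure.dirac y)
      = c • Measure.map (fun z => z * x) ν + d • Measure.map (fun z => z * y) ν := by
  unfold Measure.mconv
  rw [Measure.prod_add, prod_smul', prod_smul', Measure.prod_dirac, Measure.prod_dirac,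
    map_add₀, Measure.map_smul, Measure.map_smul,
    AEMeasurable.map_map_of_aemeasurable
      (((measurableEmbedding_prod_mk_right x).aemeasurable_map_iff).mpr (hm x).aemeasurable)
      measurable_prodMk_right.aemeasurable,
    AEMeasurable.map_map_of_aemeasurable
      (((measurableEmbedding_prod_mk_right y).aemeasurable_map_iff).mpr (hm y).aemeasurable)
      measurable_prodMk_right.aemeasurable]
  · rfl
  · exact (((measurableEmbedding_prod_mk_right x).aemeasurable_map_iff).mpr
      (hm x).aemeasurable).smul_measure c
  · exact (((measurableEmbedding_prod_mk_right y).aemeasurable_map_iff).mpr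
      (hm y).aemeasurable).smul_measure d

end Aux

/-- In a compact Hausdorff topological group `G`, the measure `μ = (1/2)(δ_e + δ_g)` has a
generalized inverse in `P(G)` if and only if `g² = e`. -/
theorem half_dirac_regular_iff_sq_eq_one {G : Type*} [Group G] [TopologicalSpace G]
    [IsTopologicalGroup G] [CompactSpace G] [T2Space G] [MeasurableSpace G] [BorelSpace G]
    (g : G) (μ : Measure G)
    (hμ : μ = (2⁻¹ : ℝ≥0∞) • Measure.dirac (1 : G) + (2⁻¹ : ℝ≥0∞) • Measure.dirac g) :
    (∃ ν : Measure G, IsProbabilityMeasure ν ∧ ν.Regular ∧ (μ ∗ₘ ν) ∗ₘ μ = μ) ↔ g ^ 2 = 1 := by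
  subst hμ
  set E : Measure G := (2⁻¹ : ℝ≥0∞) • Measure.dirac (1 : G) + (2⁻¹ : ℝ≥0∞) • Measure.dirac g
    with hE
  have h2 : (2⁻¹ : ℝ≥0∞) + 2⁻¹ = 1 := by
    rw [← one_div]; exact ENNReal.add_halves 1
  have hEuniv : E Set.univ = 1 := by
    simp [hE, Measure.add_apply, Measure.smul_apply, smul_eq_mul, h2]
  haveI hEprob : IsProbabilityMeasure E := ⟨hEuniv⟩
  have hmulL : ∀ x : G, Measurable fun y : G => x * y := fun x => measurable_const_mul x
  have hmulR : ∀ x : G, Measurable fun y : G => y * x := fun x => measurable_mul_const x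
  have hEapp : ∀ {A B : Set G}, MeasurableSet A → MeasurableSet B →
      ((1:G) ∈ A ↔ (1:G) ∈ B) → (g ∈ A ↔ g ∈ B) → E A = E B := by
    intro A B hA hB h1m hgm
    classical
    simp only [hE, Measure.add_apply, Measure.smul_apply, smul_eq_mul,
      Measure.dirac_apply' _ hA, Measure.dirac_apply' _ hB]
    rw [Set.indicator_apply, Set.indicator_apply, Set.indicator_apply, Set.indicator_apply]
    congr 2
    · exact if_congr h1m rfl rfl
    · exact if_congr hgm rfl rfl
  constructor
  · rintro ⟨ν, hν, -, hconv⟩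
    haveI := hν
    by_contra hg
    have hg1 : g ≠ 1 := fun h => hg (by rw [h, one_pow])
    have hgg : g * g ≠ 1 := fun h => hg (by rwa [pow_two])
    have hginv1 : g⁻¹ ≠ 1 := fun h => hg1 (by rw [← inv_inv g, h, inv_one])
    have hgginv : g ≠ g⁻¹ := by
      intro h
      apply hgg
      nth_rewrite 2 [h]
      exact mul_inv_cancel g
    have hgginv2 : g⁻¹ * g⁻¹ ≠ 1 := by
      intro h
      apply hgg
      have := congrArg (fun x => x⁻¹) h
      simpa [mul_inv_rev] using this
    -- the three relevant sets
    set S : Set G := {1, g} with hSdef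
    set B : Set G := {g⁻¹, 1} with hBdef
    set C : Set G := {g⁻¹ * g⁻¹, g⁻¹} with hCdef
    have hS : MeasurableSet S := (measurableSet_singleton g).insert 1
    have hB : MeasurableSet B := (measurableSet_singleton 1).insert g⁻¹
    have hC : MeasurableSet C := (measurableSet_singleton g⁻¹).insert (g⁻¹ * g⁻¹)
    have hpre1 : (fun z : G => g * z) ⁻¹' S = B := by
      ext z
      simp only [hSdef, hBdef, Set.mem_preimage, Set.mem_insert_iff, Set.mem_singleton_iff]
      constructor
      · rintro (h | h)
        · left; exact eq_inv_of_mul_eq_one_right h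
        · right; exact mul_left_cancel (h.trans (mul_one g).symm)
      · rintro (h | h)
        · left; rw [h, mul_inv_cancel]
        · right; rw [h, mul_one]
    have hpre2 : (fun z : G => z * g) ⁻¹' S = B := by
      ext z
      simp only [hSdef, hBdef, Set.mem_preimage, Set.mem_insert_iff, Set.mem_singleton_iff]
      constructor
      · rintro (h | h)
        · left; exact eq_inv_of_mul_eq_one_left h
        · right; exact mul_right_cancel (h.trans (one_mul g).symm)
      · rintro (h | h)
        · left; rw [h, inv_mul_cancel]
        · right; rw [h, one_mul]
    have hpre3 : (fun z : G => g * z) ⁻¹' B = C := by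
      ext z
      simp only [hBdef, hCdef, Set.mem_preimage, Set.mem_insert_iff, Set.mem_singleton_iff]
      constructor
      · rintro (h | h)
        · left
          calc z = g⁻¹ * (g * z) := (inv_mul_cancel_left g z).symm
          _ = g⁻¹ * g⁻¹ := by rw [h]
        · right; exact eq_inv_of_mul_eq_one_right h
      · rintro (h | h)
        · left; rw [h, mul_inv_cancel_left]
        · right; rw [h, mul_inv_cancel]
    -- expansion of the double convolution
    have h1 : E ∗ₘ ν = (2⁻¹ : ℝ≥0∞) • ν + (2⁻¹ : ℝ≥0∞) • Measure.map (fun z => g * z) ν := by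
      have h := dirac_comb_mconv hmulL 2⁻¹ 2⁻¹ (1:G) g ν
      rw [← hE] at h
      simpa using h
    have h2' : (E ∗ₘ ν) ∗ₘ E = (2⁻¹ : ℝ≥0∞) • (E ∗ₘ ν)
        + (2⁻¹ : ℝ≥0∞) • Measure.map (fun z => z * g) (E ∗ₘ ν) := by
      have h := mconv_dirac_comb hmulR 2⁻¹ 2⁻¹ (1:G) g (E ∗ₘ ν)
      rw [← hE] at h
      simpa using h
    -- evaluate at S
    have key : ((E ∗ₘ ν) ∗ₘ E) S = E S := by rw [hconv]
    have hES : E S = 1 := by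
      have h1S : (1:G) ∈ S := by simp [hSdef]
      have hgS : g ∈ S := by simp [hSdef]
      simp [hE, Measure.add_apply, Measure.smul_apply, smul_eq_mul,
        Measure.dirac_apply' _ hS, Set.indicator_of_mem h1S, Set.indicator_of_mem hgS, h2]
    set t1 := ν S with ht1
    set t2 := ν B with ht2
    set t3 := ν C with ht3
    have hκS : (Measure.map (fun z => g * z) ν) S = t2 := by
      rw [Measure.map_apply (hmulL g) hS, hpre1]
    have hκB : (Measure.map (fun z => g * z) ν) B = t3 := by
      rw [Measure.map_apply (hmulL g) hB, hpre3]
    have hmap2 : (Measure.map (fun z => z * g) (E ∗ₘ ν)) S = (E ∗ₘ ν) B := by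
      rw [Measure.map_apply (hmulR g) hS, hpre2]
    have hEνS : (E ∗ₘ ν) S = 2⁻¹ * t1 + 2⁻¹ * t2 := by
      rw [h1, Measure.add_apply, Measure.smul_apply, Measure.smul_apply, hκS, smul_eq_mul,
        smul_eq_mul]
    have hEνB : (E ∗ₘ ν) B = 2⁻¹ * t2 + 2⁻¹ * t3 := by
      rw [h1, Measure.add_apply, Measure.smul_apply, Measure.smul_apply, hκB, smul_eq_mul,
        smul_eq_mul]
    have keyeq : 2⁻¹ * (2⁻¹ * t1 + 2⁻¹ * t2) + 2⁻¹ * (2⁻¹ * t2 + 2⁻¹ * t3) = 1 := by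
      rw [← hES, ← key, h2', Measure.add_apply, Measure.smul_apply, Measure.smul_apply,
        hEνS, hmap2, hEνB, smul_eq_mul, smul_eq_mul]
    -- pass to the reals
    have hfin : ∀ s : Set G, ν s ≠ ∞ := fun s => (measure_lt_top ν s).ne
    have hle : ∀ s : Set G, (ν s).toReal ≤ 1 := by
      intro s
      rw [← ENNReal.toReal_one]
      exact ENNReal.toReal_mono ENNReal.one_ne_top prob_le_one
    have keyR : 2⁻¹ * (2⁻¹ * t1.toReal + 2⁻¹ * t2.toReal)
        + 2⁻¹ * (2⁻¹ * t2.toReal + 2⁻¹ * t3.toReal) = 1 := by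
      have hR := congrArg ENNReal.toReal keyeq
      rw [ENNReal.toReal_one] at hR
      rw [ENNReal.toReal_add (by finiteness) (by finiteness),
        ENNReal.toReal_mul, ENNReal.toReal_mul,
        ENNReal.toReal_add (by finiteness) (by finiteness),
        ENNReal.toReal_add (by finiteness) (by finiteness)] at hR
      simp only [ENNReal.toReal_mul] at hR
      simpa using hR
    have ht1R : t1.toReal = 1 := by
      have := hle S; have := hle B; have := hle C
      rw [ht1]
      nlinarith [keyR]
    have ht2R : t2.toReal = 1 := by
      have := hle S; have := hle B; have := hle C
      rw [ht2]
      nlinarith [keyR]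
    have ht3R : t3.toReal = 1 := by
      have := hle S; have := hle B; have := hle C
      rw [ht3]
      nlinarith [keyR]
    have ht1' : ν S = 1 := by
      rw [← ENNReal.ofReal_toReal (hfin S)]
      rw [show (ν S).toReal = (1:ℝ) from ht1R]
      simp
    have ht2' : ν B = 1 := by
      rw [← ENNReal.ofReal_toReal (hfin B)]
      rw [show (ν B).toReal = (1:ℝ) from ht2R]
      simp
    have ht3' : ν C = 1 := by
      rw [← ENNReal.ofReal_toReal (hfin C)]
      rw [show (ν C).toReal = (1:ℝ) from ht3R]
      simp
    -- contradiction
    have hScompl : ν Sᶜ = 0 := by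
      rw [measure_compl hS (hfin S), ht1', measure_univ, tsub_self]
    have hBcompl : ν Bᶜ = 0 := by
      rw [measure_compl hB (hfin B), ht2', measure_univ, tsub_self]
    have hSB : S ∩ B = {1} := by
      ext x
      simp only [hSdef, hBdef, Set.mem_inter_iff, Set.mem_insert_iff, Set.mem_singleton_iff]
      constructor
      · rintro ⟨h | h, h' | h'⟩
        · exact h
        · exact h
        · exact absurd (h.symm.trans h') hgginv
        · exact h'
      · intro h
        exact ⟨Or.inl h, Or.inr h⟩
    have hone : ν ({1}ᶜ : Set G) = 0 := by
      have : ({1}ᶜ : Set G) = Sᶜ ∪ Bᶜ := by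
        rw [← Set.compl_inter, hSB]
      rw [this]
      exact le_antisymm ((measure_union_le _ _).trans (by rw [hScompl, hBcompl, add_zero]))
        (zero_le)
    have hCsub : C ⊆ ({1}ᶜ : Set G) := by
      intro x hx
      rcases hx with h | h
      · simp only [Set.mem_compl_iff, Set.mem_singleton_iff]
        rw [h]; exact hgginv2
      · simp only [Set.mem_singleton_iff] at h
        simp only [Set.mem_compl_iff, Set.mem_singleton_iff]
        rw [h]; exact hginv1
    have : (1 : ℝ≥0∞) ≤ 0 := by
      rw [← ht3', ← hone]
      exact measure_mono hCsub
    simp at this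
  · intro hg
    have hgg : g * g = 1 := by rwa [← pow_two]
    -- E ∗ₘ E = E
    have hconv1 : E ∗ₘ E = E := by
      have h := dirac_comb_mconv hmulL 2⁻¹ 2⁻¹ (1:G) g E
      rw [← hE] at h
      simp only [one_mul] at h
      rw [h]
      have hmapg : Measure.map (fun z : G => g * z) E
          = (2⁻¹ : ℝ≥0∞) • Measure.dirac g + (2⁻¹ : ℝ≥0∞) • Measure.dirac (1:G) := by
        rw [hE, map_add₀ ((hmulL g).aemeasurable.smul_measure _)
            ((hmulL g).aemeasurable.smul_measure _), Measure.map_smul, Measure.map_smul,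
          Measure.map_dirac' (hmulL g), Measure.map_dirac' (hmulL g), mul_one, hgg]
      rw [hmapg]
      have hid : Measure.map (fun z : G => z) E = E := Measure.map_id
      rw [hid]
      rw [hE]
      have hc : (2⁻¹ * 2⁻¹ : ℝ≥0∞) + 2⁻¹ * 2⁻¹ = 2⁻¹ := by
        rw [← mul_add, h2, mul_one]
      have e : ∀ n : Measure G,
          (2⁻¹ : ℝ≥0∞) • n = (2⁻¹ * 2⁻¹ : ℝ≥0∞) • n + (2⁻¹ * 2⁻¹ : ℝ≥0∞) • n := by
        intro n; rw [← add_smul, hc]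
      rw [smul_add, smul_add]
      simp only [smul_smul]
      conv_rhs => rw [e (Measure.dirac 1), e (Measure.dirac g)]
      abel
    refine ⟨E, hEprob, ?_, by rw [hconv1, hconv1]⟩
    -- regularity of E
    haveI : IsFiniteMeasure E := inferInstance
    haveI hout : E.OuterRegular := by
      constructor
      intro A hA r hr
      classical
      refine ⟨(if (1:G) ∈ A then Set.univ else {1}ᶜ) ∩ (if g ∈ A then Set.univ else {g}ᶜ),
        ?_, ?_, ?_⟩
      · intro a ha
        constructor
        · split
          · trivial
          · simp only [Set.mem_compl_iff, Set.mem_singleton_iff]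
            intro h; subst h; simp_all
        · split
          · trivial
          · simp only [Set.mem_compl_iff, Set.mem_singleton_iff]
            intro h; subst h; simp_all
      · refine IsOpen.inter ?_ ?_ <;>
          (split <;> first | exact isOpen_univ | exact isOpen_compl_singleton)
      · have hU : MeasurableSet ((if (1:G) ∈ A then Set.univ else {1}ᶜ)
            ∩ (if g ∈ A then Set.univ else {g}ᶜ)) := by
          refine MeasurableSet.inter ?_ ?_ <;>
            (split <;> first | exact MeasurableSet.univ | exact (measurableSet_singleton _).compl)
        have hmem1 : ((1:G) ∈ (if (1:G) ∈ A then Set.univ else {1}ᶜ)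
            ∩ (if g ∈ A then Set.univ else {g}ᶜ)) ↔ (1:G) ∈ A := by
          by_cases h1 : (1:G) ∈ A <;> by_cases hg' : g ∈ A <;> simp [h1, hg'] <;>
            first
            | (intro h; exact hg' (h ▸ h1))
            | (intro h; exact h1 (h ▸ hg'))
            | skip
        have hmemg : (g ∈ (if (1:G) ∈ A then Set.univ else {1}ᶜ)
            ∩ (if g ∈ A then Set.univ else {g}ᶜ)) ↔ g ∈ A := by
          by_cases h1 : (1:G) ∈ A <;> by_cases hg' : g ∈ A <;> simp [h1, hg'] <;>
            first
            | (intro h; exact hg' (h ▸ h1))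
            | (intro h; exact h1 (h ▸ hg'))
            | skip
        rw [hEapp hU hA hmem1 hmemg]
        exact hr
    refine { innerRegular := ?_ }
    intro U hU r hr
    have hfin : Set.Finite ({1, g} : Set G) := (Set.finite_singleton g).insert 1
    refine ⟨({1, g} : Set G) ∩ U, Set.inter_subset_right, (hfin.inter_of_left U).isCompact, ?_⟩
    have hK : MeasurableSet (({1, g} : Set G) ∩ U) :=
      ((measurableSet_singleton g).insert 1).inter hU.measurableSet
    have h1m : ((1:G) ∈ ({1, g} : Set G) ∩ U) ↔ (1:G) ∈ U := by simp
    have hgm : (g ∈ ({1, g} : Set G) ∩ U) ↔ g ∈ U := by simp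
    rwa [hEapp hK hU.measurableSet h1m hgm]
end

section
/- Let G be a compact Hausdorff topological group with identity e, and let a ∈ G with a ≠ e and a² = e. Let 0 < α₀ < 1 with α₀ ≠ 1/2, and set μ = α₀ δ_e + (1 − α₀) δ_a. Then μ has no generalized inverse in P(G): there is no ν ∈ P(G) with μ ∗ ν ∗ μ = μ. -/
open MeasureTheory
open scoped MeasureTheory ENNReal

/-- Let `a ≠ e` with `a² = e` in a compact Hausdorff topological group `G`, and let
`0 < α₀ < 1`, `α₀ ≠ 1/2`. Then `μ = α₀ δ_e + (1 - α₀) δ_a` has no generalized inverse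
in `P(G)`. -/
theorem unbalanced_measure_no_generalized_inverse {G : Type*} [Group G] [TopologicalSpace G]
    [IsTopologicalGroup G] [CompactSpace G] [T2Space G] [MeasurableSpace G] [BorelSpace G]
    (a : G) (ha : a ≠ 1) (ha2 : a ^ 2 = 1)
    (α₀ : ℝ≥0∞) (h0 : 0 < α₀) (h1 : α₀ < 1) (hhalf : α₀ ≠ 2⁻¹)
    (μ : Measure G)
    (hμ : μ = α₀ • Measure.dirac (1 : G) + (1 - α₀) • Measure.dirac a) :
    ¬ ∃ ν : Measure G, IsProbabilityMeasure ν ∧ ν.Regular ∧ (μ ∗ₘ ν) ∗ₘ μ = μ := by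
  classical
  rintro ⟨ν, hprob, -, heq⟩
  set β : ℝ≥0∞ := 1 - α₀ with hβ
  have haa : a * a = 1 := by rw [← sq]; exact ha2
  have h1a : (1 : G) ≠ a := Ne.symm ha
  have hαβ : α₀ + β = 1 := add_tsub_cancel_of_le h1.le
  haveI : SFinite μ := by rw [hμ]; infer_instance
  haveI : IsFiniteMeasure μ := by
    constructor
    rw [hμ]
    simp only [Measure.coe_add, Pi.add_apply, Measure.smul_apply, smul_eq_mul,
      measure_univ, mul_one]
    rw [hαβ]
    exact ENNReal.one_lt_top
  -- integration against μ
  have hint : ∀ f : G → ℝ≥0∞, ∫⁻ x, f x ∂μ = α₀ * f 1 + β * f a := by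
    intro f
    rw [hμ, lintegral_add_measure, lintegral_smul_measure, lintegral_smul_measure,
      lintegral_dirac, lintegral_dirac, smul_eq_mul, smul_eq_mul]
  have hSc : μ (({1, a} : Set G)ᶜ) = 0 := by
    rw [hμ]
    simp only [Measure.coe_add, Pi.add_apply, Measure.smul_apply, smul_eq_mul,
      Measure.dirac_apply]
    simp
  -- first convolution formula
  have hconv : ∀ t : Set G, MeasurableSet t →
      (μ ∗ₘ ν) t = α₀ * ν t + β * ν ((fun y => a * y) ⁻¹' t) := by
    intro t ht
    set g : G × G → G := fun p => if p.1 = a then a * p.2 else p.2 with hg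
    have hg1 : ∀ y : G, g (1, y) = y := fun y => by
      show (if (1 : G) = a then a * y else y) = y
      rw [if_neg h1a]
    have hga : ∀ y : G, g (a, y) = a * y := fun y => by
      show (if a = a then a * y else y) = a * y
      rw [if_pos rfl]
    have hgm : Measurable g := by
      refine Measurable.ite ?_
        (((continuous_const.mul continuous_id).measurable).comp measurable_snd)
        measurable_snd
      exact measurable_fst (measurableSet_singleton a)
    have hnull : (μ.prod ν) ((Prod.fst ⁻¹' ({1, a} : Set G))ᶜ) = 0 := by
      have hps : (Prod.fst ⁻¹' ({1, a} : Set G))ᶜ = (({1, a} : Set G)ᶜ) ×ˢ (Set.univ : Set G) := by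
        rw [Set.prod_univ, Set.preimage_compl]
      rw [hps, Measure.prod_prod, hSc, zero_mul]
    have hae : (fun p : G × G => p.1 * p.2) =ᵐ[μ.prod ν] g := by
      rw [Filter.EventuallyEq, ae_iff]
      refine measure_mono_null ?_ hnull
      intro p hp
      simp only [Set.mem_setOf_eq] at hp
      simp only [Set.mem_compl_iff, Set.mem_preimage, Set.mem_insert_iff,
        Set.mem_singleton_iff]
      rintro (hp1 | hp1) <;> apply hp
      · rw [show p = (1, p.2) from by rw [← hp1], hg1, one_mul]
      · rw [show p = (a, p.2) from by rw [← hp1], hga]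
    rw [Measure.mconv, Measure.map_congr hae, Measure.map_apply hgm ht,
      Measure.prod_apply (hgm ht)]
    simp only [hint]
    congr 2
    · congr 1; ext y; simp [hg1]
    · congr 1; ext y; simp [hga]
  -- master formula
  have key : ∀ s : Set G, MeasurableSet s →
      μ s = α₀ * ((μ ∗ₘ ν) s) + β * ((μ ∗ₘ ν) ((fun x => x * a) ⁻¹' s)) := by
    intro s hs
    conv_lhs => rw [← heq]
    set g : G × G → G := fun p => if p.2 = a then p.1 * a else p.1 with hg
    have hg1 : ∀ x : G, g (x, 1) = x := fun x => by
      show (if (1 : G) = a then x * a else x) = x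
      rw [if_neg h1a]
    have hga : ∀ x : G, g (x, a) = x * a := fun x => by
      show (if a = a then x * a else x) = x * a
      rw [if_pos rfl]
    have hgm : Measurable g := by
      refine Measurable.ite ?_
        (((continuous_id.mul continuous_const).measurable).comp measurable_fst)
        measurable_fst
      exact measurable_snd (measurableSet_singleton a)
    have hnull : ((μ ∗ₘ ν).prod μ) ((Prod.snd ⁻¹' ({1, a} : Set G))ᶜ) = 0 := by
      have hps : (Prod.snd ⁻¹' ({1, a} : Set G))ᶜ = (Set.univ : Set G) ×ˢ (({1, a} : Set G)ᶜ) := by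
        rw [Set.univ_prod, Set.preimage_compl]
      rw [hps, Measure.prod_prod, hSc, mul_zero]
    have hae : (fun p : G × G => p.1 * p.2) =ᵐ[(μ ∗ₘ ν).prod μ] g := by
      rw [Filter.EventuallyEq, ae_iff]
      refine measure_mono_null ?_ hnull
      intro p hp
      simp only [Set.mem_setOf_eq] at hp
      simp only [Set.mem_compl_iff, Set.mem_preimage, Set.mem_insert_iff,
        Set.mem_singleton_iff]
      rintro (hp1 | hp1) <;> apply hp
      · rw [show p = (p.1, 1) from by rw [← hp1], hg1, mul_one]
      · rw [show p = (p.1, a) from by rw [← hp1], hga]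
    rw [show (μ ∗ₘ ν) ∗ₘ μ = Measure.map (fun p : G × G => p.1 * p.2) ((μ ∗ₘ ν).prod μ)
        from rfl,
      Measure.map_congr hae, Measure.map_apply hgm hs,
      Measure.prod_apply_symm (hgm hs)]
    simp only [hint]
    congr 2
    · congr 1; ext x; simp [hg1]
    · congr 1; ext x; simp [hga]
  -- membership equivalences
  have e1 : ∀ y : G, a * y = 1 ↔ y = a :=
    fun y => ⟨fun h => mul_left_cancel (h.trans haa.symm), fun h => h ▸ haa⟩
  have e2 : ∀ y : G, a * y = a ↔ y = 1 :=
    fun y => ⟨fun h => mul_left_cancel (h.trans (mul_one a).symm), fun h => by simp [h]⟩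
  have e3 : ∀ y : G, y * a = 1 ↔ y = a :=
    fun y => ⟨fun h => mul_right_cancel (h.trans haa.symm), fun h => h ▸ haa⟩
  have e4 : ∀ y : G, y * a = a ↔ y = 1 :=
    fun y => ⟨fun h => mul_right_cancel (h.trans (one_mul a).symm), fun h => by simp [h]⟩
  have hSm : MeasurableSet ({1, a} : Set G) := (measurableSet_singleton a).insert 1
  -- ν vanishes off {1, a}
  have hpr1 : (fun y => a * y) ⁻¹' (({1, a} : Set G)ᶜ) = ({1, a} : Set G)ᶜ := by
    ext y
    simp only [Set.mem_preimage, Set.mem_compl_iff, Set.mem_insert_iff,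
      Set.mem_singleton_iff, e1, e2]
    tauto
  have hpr2 : (fun y => y * a) ⁻¹' (({1, a} : Set G)ᶜ) = ({1, a} : Set G)ᶜ := by
    ext y
    simp only [Set.mem_preimage, Set.mem_compl_iff, Set.mem_insert_iff,
      Set.mem_singleton_iff, e3, e4]
    tauto
  have hcSc : (μ ∗ₘ ν) (({1, a} : Set G)ᶜ) = ν (({1, a} : Set G)ᶜ) := by
    rw [hconv _ hSm.compl, hpr1, ← add_mul, hαβ, one_mul]
  have h0eq := key (({1, a} : Set G)ᶜ) hSm.compl
  rw [hpr2, hcSc, ← add_mul, hαβ, one_mul] at h0eq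
  have hz : ν (({1, a} : Set G)ᶜ) = 0 := by rw [← h0eq]; exact hSc
  have hνS : ν ({1, a} : Set G) = 1 := by
    have h2 := measure_add_measure_compl (μ := ν) hSm
    rw [hz, add_zero, measure_univ] at h2
    exact h2
  have hxy : ν {1} + ν {a} = 1 := by
    rw [← hνS, show ({1, a} : Set G) = {1} ∪ {a} from Set.insert_eq 1 {a}]
    exact (measure_union (Set.disjoint_singleton_left.mpr (by simp [h1a]))
      (measurableSet_singleton a)).symm
  -- the equation at {1}
  have hainv : a⁻¹ = a := inv_eq_of_mul_eq_one_right haa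
  have q1 : (fun y => a * y) ⁻¹' ({1} : Set G) = {a} := by ext y; simp [e1, hainv]
  have q2 : (fun y => y * a) ⁻¹' ({1} : Set G) = {a} := by ext y; simp [e3, hainv]
  have q3 : (fun y => a * y) ⁻¹' ({a} : Set G) = {1} := by ext y; simp [e2]
  have E1 := key {1} (measurableSet_singleton 1)
  rw [q2, hconv _ (measurableSet_singleton 1), hconv _ (measurableSet_singleton a),
    q1, q3] at E1
  have hμ1 : μ ({1} : Set G) = α₀ := by
    rw [hμ]
    simp only [Measure.coe_add, Pi.add_apply, Measure.smul_apply, smul_eq_mul,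
      Measure.dirac_apply]
    simp [ha]
  rw [hμ1] at E1
  -- pass to real numbers
  have hαt : α₀ ≠ ⊤ := h1.ne_top
  have hβt : β ≠ ⊤ := ((tsub_le_self (a := (1:ℝ≥0∞)) (b := α₀)).trans_lt
    ENNReal.one_lt_top).ne
  have hxt : ν {1} ≠ ⊤ := measure_ne_top ν _
  have hyt : ν {a} ≠ ⊤ := measure_ne_top ν _
  set A := α₀.toReal with hA
  set B := β.toReal with hB
  set X := (ν {1}).toReal with hX
  set Y := (ν {a}).toReal with hY
  have hE : A = A * (A * X + B * Y) + B * (A * Y + B * X) := by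
    have h := congrArg ENNReal.toReal E1
    rw [ENNReal.toReal_add (ENNReal.mul_ne_top hαt (ENNReal.add_ne_top.mpr
        ⟨ENNReal.mul_ne_top hαt hxt, ENNReal.mul_ne_top hβt hyt⟩))
      (ENNReal.mul_ne_top hβt (ENNReal.add_ne_top.mpr
        ⟨ENNReal.mul_ne_top hαt hyt, ENNReal.mul_ne_top hβt hxt⟩)),
      ENNReal.toReal_mul, ENNReal.toReal_mul,
      ENNReal.toReal_add (ENNReal.mul_ne_top hαt hxt) (ENNReal.mul_ne_top hβt hyt),
      ENNReal.toReal_add (ENNReal.mul_ne_top hαt hyt) (ENNReal.mul_ne_top hβt hxt),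
      ENNReal.toReal_mul, ENNReal.toReal_mul, ENNReal.toReal_mul, ENNReal.toReal_mul] at h
    exact h
  have hXY : X + Y = 1 := by
    have h := congrArg ENNReal.toReal hxy
    rw [ENNReal.toReal_add hxt hyt] at h
    simpa using h
  have hAB : A + B = 1 := by
    have h := congrArg ENNReal.toReal hαβ
    rw [ENNReal.toReal_add hαt hβt] at h
    simpa using h
  have hA0 : 0 < A := ENNReal.toReal_pos h0.ne' hαt
  have hB0 : 0 < B := by
    refine ENNReal.toReal_pos (fun h => ?_) hβt
    exact absurd (tsub_eq_zero_iff_le.mp h) (not_le.mpr h1)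
  have hX0 : 0 ≤ X := ENNReal.toReal_nonneg
  have hY0 : 0 ≤ Y := ENNReal.toReal_nonneg
  have hAhalf : A ≠ 1 / 2 := by
    intro h
    apply hhalf
    have h2 : ((2 : ℝ≥0∞)⁻¹).toReal = 1 / 2 := by
      rw [ENNReal.toReal_inv]
      norm_num
    exact (ENNReal.toReal_eq_toReal_iff' hαt (by simp)).mp (h.trans h2.symm)
  have hB' : B = 1 - A := by linarith
  have hX' : X = 1 - Y := by linarith
  rw [hB', hX'] at hE
  have hY1 : Y ≤ 1 := by linarith
  have hA1 : A < 1 := by linarith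
  have hpoly : Y * (2 * A - 1) ^ 2 = (1 - A) * (1 - 2 * A) := by nlinarith [hE]
  rcases lt_trichotomy A (1 / 2) with hc | hc | hc
  · nlinarith [hpoly, mul_nonneg (sub_nonneg.mpr hY1) (sq_nonneg (2 * A - 1)),
      mul_pos (by linarith : (0:ℝ) < 1 - 2 * A) hA0]
  · exact hAhalf hc
  · nlinarith [hpoly, mul_nonneg hY0 (sq_nonneg (2 * A - 1)),
      mul_pos (by linarith : (0:ℝ) < 1 - A) (by linarith : (0:ℝ) < 2 * A - 1)]
end

section
/- Let G = {e, a} be the two-element group (a² = e, a ≠ e). Then the elements of P(G) possessing a generalized inverse are exactly δ_e, δ_a, and (1/2)(δ_e + δ_a); that is, μ = α₀δ_e + α₁δ_a (with α₀, α₁ ≥ 0, α₀ + α₁ = 1) satisfies μ ∗ ν ∗ μ = μ for some ν ∈ P(G) if and only if α₀ ∈ {0, 1/2, 1}. -/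
open MeasureTheory
open scoped MeasureTheory ENNReal NNReal

/-- Any finite measure on a finite discrete topological space is regular. -/
lemma aux_regular_of_finite {X : Type*} [TopologicalSpace X] [DiscreteTopology X]
    [MeasurableSpace X] [Finite X] (μ : Measure X) [IsFiniteMeasure μ] : μ.Regular := by
  exact { outerRegular := fun A _ r hr => ⟨A, subset_rfl, isOpen_discrete A, hr⟩,
          innerRegular := fun U _ r hr => ⟨U, subset_rfl, (Set.toFinite U).isCompact, hr⟩,
          lt_top_of_isCompact := fun _ _ => measure_lt_top μ _ }

/-- The real arithmetic at the heart of the theorem. -/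
lemma aux_arith (p q : ℝ) (hp0 : 0 ≤ p) (hp1 : p ≤ 1) (hq0 : 0 ≤ q) (hq1 : q ≤ 1)
    (h : (p * q + (1 - p) * (1 - q)) * p + (p * (1 - q) + (1 - p) * q) * (1 - p) = p) :
    p = 0 ∨ p = 1 / 2 ∨ p = 1 := by
  have hfac : (2 * p - 1) * ((2 * p - 1) * q - p) = 0 := by linear_combination h
  rcases lt_trichotomy p (1 / 2) with h' | h' | h'
  · left
    have h2 : (2 * p - 1) * q - p = 0 := by
      rcases mul_eq_zero.mp hfac with h3 | h3
      · exfalso; nlinarith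
      · exact h3
    have : (2 * p - 1) * q ≤ 0 := mul_nonpos_of_nonpos_of_nonneg (by linarith) hq0
    linarith
  · right; left; exact h'
  · right; right
    have h2 : (2 * p - 1) * q - p = 0 := by
      rcases mul_eq_zero.mp hfac with h3 | h3
      · exfalso; nlinarith
      · exact h3
    have : (2 * p - 1) * q ≤ 2 * p - 1 := by nlinarith
    linarith

/-- In the two-element group `G = {e, a}` (`a ≠ e`, `a² = e`) the elements of `P(G)`
possessing a generalized inverse are exactly `δ_e`, `δ_a` and `(1/2)(δ_e + δ_a)`:
`μ = α₀ δ_e + α₁ δ_a` with `α₀ + α₁ = 1` has a generalized inverse iff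
`α₀ ∈ {0, 1/2, 1}`. -/
theorem two_element_group_regular_elements {G : Type*} [Group G] [TopologicalSpace G]
    [IsTopologicalGroup G] [CompactSpace G] [T2Space G] [MeasurableSpace G] [BorelSpace G]
    (a : G) (ha : a ≠ 1) (ha2 : a ^ 2 = 1) (hG : ∀ g : G, g = 1 ∨ g = a)
    (α₀ α₁ : ℝ≥0∞) (hsum : α₀ + α₁ = 1)
    (μ : Measure G)
    (hμ : μ = α₀ • Measure.dirac (1 : G) + α₁ • Measure.dirac a) :
    (∃ ν : Measure G, IsProbabilityMeasure ν ∧ ν.Regular ∧ (μ ∗ₘ ν) ∗ₘ μ = μ) ↔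
      (α₀ = 0 ∨ α₀ = 2⁻¹ ∨ α₀ = 1) := by
  have haa : a * a = 1 := by rw [← sq]; exact ha2
  have ha' : (1 : G) ≠ a := ha.symm
  -- G is finite and discrete
  haveI hfin : Finite G := Finite.of_surjective (fun b : Bool => if b then a else 1)
    (fun g => by
      rcases hG g with h | h
      · exact ⟨false, h.symm⟩
      · exact ⟨true, h.symm⟩)
  haveI : DiscreteTopology G := Finite.instDiscreteTopology
  haveI : MeasurableSingletonClass G := ⟨fun x => isClosed_singleton.measurableSet⟩
  have hmeas : ∀ s : Set G, MeasurableSet s := fun s => (Set.to_countable s).measurableSet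
  have hmeas2 : ∀ s : Set (G × G), MeasurableSet s := fun s =>
    (Set.to_countable s).measurableSet
  haveI : MeasurableMul₂ G := ⟨fun s _ => hmeas2 _⟩
  -- values of μ
  have hμ1 : μ {1} = α₀ := by
    rw [hμ]; simp [Measure.dirac_apply, Set.indicator_apply, ha]
  have hμa : μ {a} = α₁ := by
    rw [hμ]; simp [Measure.dirac_apply, Set.indicator_apply, ha']
  have huniv : (Set.univ : Set G) = {1} ∪ {a} := by
    ext g
    simp only [Set.mem_univ, Set.mem_union, Set.mem_singleton_iff, true_iff]
    exact hG g
  have hdisj : Disjoint ({(1 : G)} : Set G) {a} := Set.disjoint_singleton.mpr ha'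
  have hsplit : ∀ ρ : Measure G, ρ Set.univ = ρ {1} + ρ {a} := fun ρ => by
    rw [huniv, measure_union hdisj (hmeas _)]
  haveI hμprob : IsProbabilityMeasure μ := ⟨by rw [hsplit, hμ1, hμa, hsum]⟩
  -- preimages of singletons under multiplication
  have hpre1 : (fun p : G × G => p.1 * p.2) ⁻¹' {1} =
      ({(1 : G)} ×ˢ {(1 : G)}) ∪ ({a} ×ˢ {a}) := by
    ext ⟨x, y⟩
    rcases hG x with hx | hx <;> rcases hG y with hy | hy <;>
      simp [hx, hy, haa, ha, ha', Prod.ext_iff]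
  have hprea : (fun p : G × G => p.1 * p.2) ⁻¹' {a} =
      ({(1 : G)} ×ˢ {a}) ∪ ({a} ×ˢ {(1 : G)}) := by
    ext ⟨x, y⟩
    rcases hG x with hx | hx <;> rcases hG y with hy | hy <;>
      simp [hx, hy, haa, ha, ha', Prod.ext_iff]
  have hdisj1 : Disjoint (({(1 : G)} : Set G) ×ˢ ({(1 : G)} : Set G))
      (({a} : Set G) ×ˢ ({a} : Set G)) := by
    rw [Set.disjoint_left]
    rintro ⟨x, y⟩ hx hy
    simp only [Set.mem_prod, Set.mem_singleton_iff] at hx hy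
    exact ha (by rw [← hy.1, hx.1])
  have hdisja : Disjoint (({(1 : G)} : Set G) ×ˢ ({a} : Set G))
      (({a} : Set G) ×ˢ ({(1 : G)} : Set G)) := by
    rw [Set.disjoint_left]
    rintro ⟨x, y⟩ hx hy
    simp only [Set.mem_prod, Set.mem_singleton_iff] at hx hy
    exact ha (by rw [← hy.1, hx.1])
  -- convolution values
  have conv1 : ∀ ρ σ : Measure G, SFinite σ →
      (ρ ∗ₘ σ) {1} = ρ {1} * σ {1} + ρ {a} * σ {a} := by
    intro ρ σ hσ
    haveI := hσ
    rw [show ρ ∗ₘ σ = Measure.map (fun p : G × G => p.1 * p.2) (ρ.prod σ) from rfl,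
      Measure.map_apply measurable_mul (hmeas _), hpre1,
      measure_union hdisj1 (hmeas2 _), Measure.prod_prod, Measure.prod_prod]
  have conva : ∀ ρ σ : Measure G, SFinite σ →
      (ρ ∗ₘ σ) {a} = ρ {1} * σ {a} + ρ {a} * σ {1} := by
    intro ρ σ hσ
    haveI := hσ
    rw [show ρ ∗ₘ σ = Measure.map (fun p : G × G => p.1 * p.2) (ρ.prod σ) from rfl,
      Measure.map_apply measurable_mul (hmeas _), hprea,
      measure_union hdisja (hmeas2 _), Measure.prod_prod, Measure.prod_prod]
  -- extensionality on two-point space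
  have ext2 : ∀ ρ σ : Measure G, ρ {1} = σ {1} → ρ {a} = σ {a} → ρ = σ := by
    intro ρ σ h1 h2
    ext s hs
    by_cases e1 : (1 : G) ∈ s <;> by_cases e2 : a ∈ s
    · have hse : s = Set.univ := by
        ext g; rcases hG g with h | h <;> simp [h, e1, e2]
      rw [hse, huniv, measure_union hdisj (hmeas _), measure_union hdisj (hmeas _), h1, h2]
    · have hse : s = {1} := by
        ext g; rcases hG g with h | h <;> simp [h, e1, e2, ha]
      rw [hse, h1]
    · have hse : s = {a} := by
        ext g; rcases hG g with h | h <;> simp [h, e1, e2, ha']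
      rw [hse, h2]
    · have hse : s = (∅ : Set G) := by
        ext g; rcases hG g with h | h <;> simp [h, e1, e2]
      rw [hse]; simp
  constructor
  · rintro ⟨ν, hνp, _, heq⟩
    haveI := hνp
    have hq1 : ν {1} + ν {a} = 1 := by rw [← hsplit]; exact measure_univ
    have key : (α₀ * ν {1} + α₁ * ν {a}) * α₀ + (α₀ * ν {a} + α₁ * ν {1}) * α₁ = α₀ := by
      have := congrArg (fun m : Measure G => m {1}) heq
      rw [conv1 _ _ inferInstance, conv1 _ _ inferInstance, conva _ _ inferInstance,
        hμ1, hμa] at this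
      exact this
    -- pass to real numbers
    have hα₀top : α₀ ≠ ⊤ := fun h => by simp [h] at hsum
    have hα₁top : α₁ ≠ ⊤ := fun h => by simp [h] at hsum
    have hqtop : ν {1} ≠ ⊤ := (measure_lt_top ν _).ne
    have hstop : ν {a} ≠ ⊤ := (measure_lt_top ν _).ne
    lift α₀ to ℝ≥0 using hα₀top with p
    lift α₁ to ℝ≥0 using hα₁top with r
    lift ν {1} to ℝ≥0 using hqtop with q
    lift ν {a} to ℝ≥0 using hstop with t
    rw [← ENNReal.coe_add, ← ENNReal.coe_one, ENNReal.coe_inj] at hsum hq1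
    rw [show ((p : ℝ≥0∞) * q + r * t) * p + ((p : ℝ≥0∞) * t + r * q) * r
        = (((p * q + r * t) * p + (p * t + r * q) * r : ℝ≥0) : ℝ≥0∞) by push_cast; ring,
      ENNReal.coe_inj] at key
    have hsumR : (p : ℝ) + r = 1 := by exact_mod_cast congrArg NNReal.toReal hsum
    have hq1R : (q : ℝ) + t = 1 := by exact_mod_cast congrArg NNReal.toReal hq1
    have keyR : ((p : ℝ) * q + r * t) * p + (p * t + r * q) * r = p := by
      exact_mod_cast congrArg NNReal.toReal key
    have hr : (r : ℝ) = 1 - p := by linarith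
    have ht : (t : ℝ) = 1 - q := by linarith
    rw [hr, ht] at keyR
    have := aux_arith p q p.coe_nonneg (by linarith [r.coe_nonneg])
      q.coe_nonneg (by linarith [t.coe_nonneg]) keyR
    rcases this with h | h | h
    · left; exact_mod_cast (by exact_mod_cast h : p = (0 : ℝ≥0))
    · right; left
      have hp : p = (2⁻¹ : ℝ≥0) := by
        have : (p : ℝ) = ((2⁻¹ : ℝ≥0) : ℝ) := by rw [h]; norm_num
        exact_mod_cast this
      rw [hp]
      simp [ENNReal.coe_inv]
    · right; right; exact_mod_cast (by exact_mod_cast h : p = (1 : ℝ≥0))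
  · intro hcase
    refine ⟨μ, hμprob, aux_regular_of_finite μ, ext2 _ _ ?_ ?_⟩
    · rw [conv1 _ _ inferInstance, conv1 _ _ inferInstance, conva _ _ inferInstance, hμ1, hμa]
      rcases hcase with h | h | h
      · have h1 : α₁ = 1 := by simpa [h] using hsum
        rw [h, h1]; simp
      · have h1 : α₁ = 2⁻¹ := by
          rw [h] at hsum
          exact (ENNReal.add_right_inj (by norm_num)).mp
            (hsum.trans ENNReal.inv_two_add_inv_two.symm)
        rw [h, h1]
        rw [show ((2 : ℝ≥0∞))⁻¹ = ((2⁻¹ : ℝ≥0) : ℝ≥0∞) by rw [ENNReal.coe_inv two_ne_zero, ENNReal.coe_ofNat]]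
        norm_cast
        rw [← NNReal.coe_inj]
        push_cast
        norm_num
      · have h1 : α₁ = 0 := by
          rw [h] at hsum
          exact ((ENNReal.add_right_inj (by norm_num)).mp (hsum.trans (add_zero 1).symm))
        rw [h, h1]; simp
    · rw [conva _ _ inferInstance, conv1 _ _ inferInstance, conva _ _ inferInstance, hμ1, hμa]
      rcases hcase with h | h | h
      · have h1 : α₁ = 1 := by simpa [h] using hsum
        rw [h, h1]; simp
      · have h1 : α₁ = 2⁻¹ := by
          rw [h] at hsum
          exact (ENNReal.add_right_inj (by norm_num)).mp
            (hsum.trans ENNReal.inv_two_add_inv_two.symm)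
        rw [h, h1]
        rw [show ((2 : ℝ≥0∞))⁻¹ = ((2⁻¹ : ℝ≥0) : ℝ≥0∞) by rw [ENNReal.coe_inv two_ne_zero, ENNReal.coe_ofNat]]
        norm_cast
        rw [← NNReal.coe_inj]
        push_cast
        norm_num
      · have h1 : α₁ = 0 := by
          rw [h] at hsum
          exact ((ENNReal.add_right_inj (by norm_num)).mp (hsum.trans (add_zero 1).symm))
        rw [h, h1]; simp
end

section
/- Let G be a compact Hausdorff topological group and let μ be a regular Borel probability measure on G that is idempotent under convolution, μ ∗ μ = μ. Then the topological support supp(μ) is a closed subgroup of G. -/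
open MeasureTheory
open scoped MeasureTheory ENNReal

/-- The topological support of a measure: the set of points all of whose open
neighbourhoods have positive measure. -/
def measSupport {G : Type*} [TopologicalSpace G] [MeasurableSpace G]
    (μ : Measure G) : Set G :=
  {x | ∀ U : Set G, IsOpen U → x ∈ U → 0 < μ U}

/-- The support of a convolution-idempotent regular Borel probability measure on a compact
Hausdorff topological group is a closed subgroup. -/
theorem support_of_idempotent_is_closed_subgroup {G : Type*} [Group G] [TopologicalSpace G]
    [IsTopologicalGroup G] [CompactSpace G] [T2Space G] [MeasurableSpace G] [BorelSpace G]
    (μ : Measure G) (hμ : IsProbabilityMeasure μ) (hμr : μ.Regular)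
    (hidem : μ ∗ₘ μ = μ) :
    ∃ H : Subgroup G, IsClosed (H : Set G) ∧ measSupport μ = (H : Set G) := by
  classical
  set S := measSupport μ with hSdef
  have hne0 : μ ≠ 0 := by
    intro h
    have := hμ.measure_univ
    rw [h] at this
    simp at this
  -- the multiplication map is a.e.-measurable w.r.t. μ.prod μ (else μ ∗ μ = 0 ≠ μ)
  have hae : AEMeasurable (fun p : G × G => p.1 * p.2) (μ.prod μ) := by
    by_contra h
    have h0 : μ ∗ₘ μ = 0 := Measure.map_of_not_aemeasurable h
    rw [hidem] at h0
    exact hne0 h0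
  -- lower bound for μ of measurable sets via boxes in the preimage
  have hconv : ∀ U : Set G, MeasurableSet U → ∀ V W : Set G,
      V ×ˢ W ⊆ (fun p : G × G => p.1 * p.2) ⁻¹' U → μ V * μ W ≤ μ U := by
    intro U hU V W hVW
    calc μ V * μ W = (μ.prod μ) (V ×ˢ W) := (Measure.prod_prod V W).symm
      _ ≤ (μ.prod μ) ((fun p : G × G => p.1 * p.2) ⁻¹' U) := measure_mono hVW
      _ = (μ ∗ₘ μ) U := (Measure.map_apply_of_aemeasurable hae hU).symm
      _ = μ U := by rw [hidem]
  -- S is closed under multiplication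
  have hmul : ∀ x ∈ S, ∀ y ∈ S, x * y ∈ S := by
    intro x hx y hy U hUo hxyU
    have hmem : (fun p : G × G => p.1 * p.2) ⁻¹' U ∈ nhds (x, y) :=
      continuous_mul.continuousAt.preimage_mem_nhds (hUo.mem_nhds hxyU)
    rcases mem_nhds_prod_iff'.mp hmem with ⟨V, W, hVo, hxV, hWo, hyW, hsub⟩
    have hle := hconv U hUo.measurableSet V W hsub
    have h1 := hx V hVo hxV
    have h2 := hy W hWo hyW
    exact lt_of_lt_of_le (ENNReal.mul_pos h1.ne' h2.ne') hle
  -- S is nonempty (by compactness a cover by null open sets would give μ = 0)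
  have hne : S.Nonempty := by
    by_contra h
    rw [Set.not_nonempty_iff_eq_empty] at h
    have hcov : ∀ x : G, ∃ U : Set G, IsOpen U ∧ x ∈ U ∧ μ U = 0 := by
      intro x
      have hx : x ∉ S := by rw [h]; exact Set.notMem_empty x
      rw [hSdef] at hx
      simp only [measSupport, Set.mem_setOf_eq, not_forall] at hx
      rcases hx with ⟨U, hUo, hxU, hU0⟩
      exact ⟨U, hUo, hxU, by simpa using hU0⟩
    choose u huo hxu hu0 using hcov
    obtain ⟨t, ht⟩ := isCompact_univ.elim_finite_subcover u huo
      (fun x _ => Set.mem_iUnion.mpr ⟨x, hxu x⟩)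
    have : μ (Set.univ : Set G) = 0 := by
      refine measure_mono_null ht ?_
      exact (measure_biUnion_null_iff t.countable_toSet).mpr fun i _ => hu0 i
    rw [measure_univ] at this
    exact one_ne_zero this
  -- positive powers stay in S
  have hpow : ∀ x ∈ S, ∀ k : ℕ, 1 ≤ k → x ^ k ∈ S := by
    intro x hx k hk
    induction k with
    | zero => omega
    | succ n ih =>
      rcases Nat.eq_or_lt_of_le hk with h1 | h1
      · simpa [← h1] using hx
      · have hn : 1 ≤ n := by omega
        have := hmul _ (ih hn) _ hx
        simpa [pow_succ] using this
  -- key cluster-point fact: for x ∈ S, every neighbourhood of 1 contains some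
  -- power x ^ k with k ≥ 2
  have hkey : ∀ x ∈ S, ∀ U : Set G, IsOpen U → (1 : G) ∈ U →
      ∃ k : ℕ, 2 ≤ k ∧ x ^ k ∈ U := by
    intro x _hx U hUo hU1
    obtain ⟨y, hy⟩ :=
      exists_clusterPt_of_compactSpace (Filter.map (fun n : ℕ => x ^ n) Filter.atTop)
    have hy' : MapClusterPt y Filter.atTop (fun n : ℕ => x ^ n) := hy
    -- find W₁, W₂ open nbhds of 1 with (W₁)⁻¹ * W₂ ⊆ U (via continuity at (1,1))
    have hcont : Continuous fun p : G × G => p.1⁻¹ * p.2 :=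
      (continuous_fst.inv).mul continuous_snd
    have hmem : (fun p : G × G => p.1⁻¹ * p.2) ⁻¹' U ∈ nhds ((1 : G), (1 : G)) := by
      apply hcont.continuousAt.preimage_mem_nhds
      simpa using hUo.mem_nhds hU1
    rcases mem_nhds_prod_iff'.mp hmem with ⟨W₁, W₂, hW₁o, h1W₁, hW₂o, h1W₂, hWsub⟩
    set W := W₁ ∩ W₂ with hW
    have hWo : IsOpen W := hW₁o.inter hW₂o
    have h1W : (1 : G) ∈ W := ⟨h1W₁, h1W₂⟩
    -- V = y • W is an open nbhd of y
    set V : Set G := (fun g => y⁻¹ * g) ⁻¹' W with hVdef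
    have hVo : IsOpen V := hWo.preimage (continuous_const.mul continuous_id)
    have hyV : y ∈ V := by simp [hVdef, h1W]
    have hVnhds : V ∈ nhds y := hVo.mem_nhds hyV
    have hfreq : ∃ᶠ n in Filter.atTop, x ^ n ∈ V := mapClusterPt_iff_frequently.mp hy' V hVnhds
    obtain ⟨n, hnV, hn1⟩ := (hfreq.and_eventually (Filter.eventually_ge_atTop 1)).exists
    obtain ⟨m, hmV, hm⟩ := (hfreq.and_eventually (Filter.eventually_ge_atTop (n + 2))).exists
    refine ⟨m - n, by omega, ?_⟩
    have h1 : y⁻¹ * x ^ n ∈ W₁ := hnV.1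
    have h2 : y⁻¹ * x ^ m ∈ W₂ := hmV.2
    have h3 : ((y⁻¹ * x ^ n), (y⁻¹ * x ^ m)) ∈ W₁ ×ˢ W₂ := ⟨h1, h2⟩
    have h4 : (y⁻¹ * x ^ n)⁻¹ * (y⁻¹ * x ^ m) ∈ U := hWsub h3
    have h5 : (y⁻¹ * x ^ n)⁻¹ * (y⁻¹ * x ^ m) = (x ^ n)⁻¹ * x ^ m := by group
    have h6 : x ^ m = x ^ n * x ^ (m - n) := by
      rw [← pow_add]
      congr 1
      omega
    rw [h5, h6] at h4
    simpa [mul_assoc] using h4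
  -- S is closed under inverses
  have hinv : ∀ x ∈ S, x⁻¹ ∈ S := by
    intro x hx U hUo hxU
    set T : Set G := (fun g => x⁻¹ * g) ⁻¹' U with hTdef
    have hTo : IsOpen T := hUo.preimage (continuous_const.mul continuous_id)
    have h1T : (1 : G) ∈ T := by simpa [hTdef] using hxU
    obtain ⟨k, hk2, hkT⟩ := hkey x hx T hTo h1T
    have hk' : x ⁻¹ * x ^ k = x ^ (k - 1) := by
      have : x ^ k = x * x ^ (k - 1) := by
        rw [← pow_succ']
        congr 1
        omega
      rw [this]
      group
    have hmem : x ^ (k - 1) ∈ U := by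
      have := hkT
      simp only [hTdef, Set.mem_preimage] at this
      rwa [hk'] at this
    exact hpow x hx (k - 1) (by omega) U hUo hmem
  -- 1 ∈ S
  obtain ⟨x₀, hx₀⟩ := hne
  have hone : (1 : G) ∈ S := by
    have := hmul _ hx₀ _ (hinv _ hx₀)
    simpa using this
  -- S is closed
  have hclosed : IsClosed S := by
    rw [← isOpen_compl_iff]
    rw [isOpen_iff_forall_mem_open]
    intro x hx
    simp only [hSdef, measSupport, Set.mem_compl_iff, Set.mem_setOf_eq, not_forall] at hx
    rcases hx with ⟨U, hUo, hxU, hU0⟩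
    have hU0' : μ U = 0 := by simpa using hU0
    refine ⟨U, ?_, hUo, hxU⟩
    intro z hz hzS
    have := hzS U hUo hz
    rw [hU0'] at this
    exact lt_irrefl 0 this
  refine ⟨{ carrier := S,
            mul_mem' := fun {a b} ha hb => hmul a ha b hb,
            one_mem' := hone,
            inv_mem' := fun {a} ha => hinv a ha }, hclosed, rfl⟩
end

section
/- Let G be a compact Hausdorff topological group with identity e, let a ∈ G with a ≠ e and a² = e, and let μ = α₀ δ_e + α₁ δ_a with α₀, α₁ > 0 and α₀ + α₁ = 1. If ν ∈ P(G) satisfies μ ∗ ν ∗ μ = μ, then the topological support of ν is contained in {e, a}; consequently ν = β₀ δ_e + β₁ δ_a for some β₀, β₁ ≥ 0 with β₀ + β₁ = 1. -/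
open MeasureTheory
open scoped MeasureTheory ENNReal

section aux

variable {G : Type*} [Group G] [TopologicalSpace G]
    [IsTopologicalGroup G] [MeasurableSpace G] [BorelSpace G] [T2Space G]

/-- `(ρ ∗ₘ (α₀ δ₁ + α₁ δ_a)) B = ρ B` whenever `B` is invariant under right
multiplication by `a`. -/
lemma aux_mconv_right (a : G) (α₀ α₁ : ℝ≥0∞) (hsum : α₀ + α₁ = 1)
    (ρ : Measure G) [SFinite ρ] {B : Set G} (hB : MeasurableSet B)
    (hBa : ∀ x : G, x * a ∈ B ↔ x ∈ B) :
    (ρ ∗ₘ (α₀ • Measure.dirac (1 : G) + α₁ • Measure.dirac a)) B = ρ B := by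
  classical
  set μ' : Measure G := α₀ • Measure.dirac (1 : G) + α₁ • Measure.dirac a with hμ'
  haveI : IsProbabilityMeasure μ' := ⟨by simp [hμ', hsum]⟩
  -- a measurable function a.e. equal to multiplication
  set g : G × G → G :=
    (Set.univ ×ˢ ({(1 : G)} : Set G)).piecewise Prod.fst (fun p => p.1 * a) with hg
  have hgm : Measurable g :=
    Measurable.piecewise (MeasurableSet.univ.prod (measurableSet_singleton 1))
      measurable_fst (((continuous_mul_right a).measurable).comp measurable_fst)
  have hmul_ae : (fun p : G × G => p.1 * p.2) =ᵐ[ρ.prod μ'] g := by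
    have hnull : (ρ.prod μ') ((Set.univ : Set G) ×ˢ ({1, a} : Set G))ᶜ = 0 := by
      have hceq : ((Set.univ : Set G) ×ˢ ({1, a} : Set G))ᶜ
          = (Set.univ : Set G) ×ˢ ({1, a} : Set G)ᶜ := by
        ext p; simp
      rw [hceq, Measure.prod_prod]
      have : μ' ({1, a} : Set G)ᶜ = 0 := by
        have hm : MeasurableSet (({1, a} : Set G)ᶜ) :=
          ((measurableSet_singleton a).insert 1).compl
        rw [hμ', Measure.add_apply, Measure.smul_apply, Measure.smul_apply,
          Measure.dirac_apply' _ hm, Measure.dirac_apply' _ hm,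
          Set.indicator_of_notMem (by simp), Set.indicator_of_notMem (by simp)]
        simp
      rw [this, mul_zero]
    refine Filter.eventuallyEq_of_mem (by rwa [mem_ae_iff]) ?_
    rintro ⟨x, y⟩ hy
    simp only [Set.mem_prod, Set.mem_univ, true_and, Set.mem_insert_iff,
      Set.mem_singleton_iff] at hy
    by_cases hmem : (x, y) ∈ Set.univ ×ˢ ({(1 : G)} : Set G)
    · have hy1 : y = 1 := Set.mem_singleton_iff.mp hmem.2
      rw [hg, Set.piecewise_eq_of_mem _ _ _ hmem]
      simp [hy1]
    · have hya : y = a := by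
        rcases hy with hy | hy
        · exact absurd (by simp [hy]) hmem
        · exact hy
      rw [hg, Set.piecewise_eq_of_notMem _ _ _ hmem]
      simp [hya]
  have hg1 : ∀ x : G, g (x, 1) = x :=
    fun x => Set.piecewise_eq_of_mem _ _ _ (by simp)
  have hga : ∀ x : G, g (x, a) ∈ B ↔ x ∈ B := by
    intro x
    by_cases ha1 : a = 1
    · rw [show g (x, a) = x by rw [ha1]; exact hg1 x]
    · rw [show g (x, a) = x * a from
        Set.piecewise_eq_of_notMem _ _ _ (by simp [Ne.symm ha1, ha1])]
      exact hBa x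
  unfold Measure.mconv
  rw [Measure.map_congr hmul_ae, Measure.map_apply hgm hB,
    Measure.prod_apply (hgm hB)]
  have key : ∀ x : G, μ' (Prod.mk x ⁻¹' (g ⁻¹' B)) = B.indicator 1 x := by
    intro x
    have hm : MeasurableSet (Prod.mk x ⁻¹' (g ⁻¹' B)) :=
      (hgm.comp measurable_prodMk_left) hB
    rw [hμ', Measure.add_apply, Measure.smul_apply, Measure.smul_apply,
      Measure.dirac_apply' _ hm, Measure.dirac_apply' _ hm]
    have h1 : ((1 : G) ∈ Prod.mk x ⁻¹' (g ⁻¹' B)) ↔ x ∈ B := by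
      simp only [Set.mem_preimage]; rw [hg1 x]
    have h2 : (a ∈ Prod.mk x ⁻¹' (g ⁻¹' B)) ↔ x ∈ B := by
      simp only [Set.mem_preimage]; exact hga x
    by_cases hx : x ∈ B
    · rw [Set.indicator_of_mem (h1.mpr hx), Set.indicator_of_mem (h2.mpr hx),
        Set.indicator_of_mem hx]
      simp [hsum]
    · rw [Set.indicator_of_notMem (fun hh => hx (h1.mp hh)),
        Set.indicator_of_notMem (fun hh => hx (h2.mp hh)),
        Set.indicator_of_notMem hx]
      simp
  rw [lintegral_congr key, lintegral_indicator_one hB]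

/-- `((α₀ δ₁ + α₁ δ_a) ∗ₘ ρ) B = ρ B` whenever `B` is invariant under left
multiplication by `a`. -/
lemma aux_mconv_left (a : G) (α₀ α₁ : ℝ≥0∞) (hsum : α₀ + α₁ = 1)
    (ρ : Measure G) [SFinite ρ] {B : Set G} (hB : MeasurableSet B)
    (hBa : ∀ x : G, a * x ∈ B ↔ x ∈ B) :
    ((α₀ • Measure.dirac (1 : G) + α₁ • Measure.dirac a) ∗ₘ ρ) B = ρ B := by
  classical
  set μ' : Measure G := α₀ • Measure.dirac (1 : G) + α₁ • Measure.dirac a with hμ'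
  haveI : IsProbabilityMeasure μ' := ⟨by simp [hμ', hsum]⟩
  set g : G × G → G :=
    (({(1 : G)} : Set G) ×ˢ (Set.univ : Set G)).piecewise Prod.snd (fun p => a * p.2) with hg
  have hgm : Measurable g :=
    Measurable.piecewise ((measurableSet_singleton 1).prod MeasurableSet.univ)
      measurable_snd (((continuous_mul_left a).measurable).comp measurable_snd)
  have hmul_ae : (fun p : G × G => p.1 * p.2) =ᵐ[μ'.prod ρ] g := by
    have hnull : (μ'.prod ρ) (({1, a} : Set G) ×ˢ (Set.univ : Set G))ᶜ = 0 := by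
      have hceq : (({1, a} : Set G) ×ˢ (Set.univ : Set G))ᶜ
          = ({1, a} : Set G)ᶜ ×ˢ (Set.univ : Set G) := by
        ext p; simp
      rw [hceq, Measure.prod_prod]
      have : μ' ({1, a} : Set G)ᶜ = 0 := by
        have hm : MeasurableSet (({1, a} : Set G)ᶜ) :=
          ((measurableSet_singleton a).insert 1).compl
        rw [hμ', Measure.add_apply, Measure.smul_apply, Measure.smul_apply,
          Measure.dirac_apply' _ hm, Measure.dirac_apply' _ hm,
          Set.indicator_of_notMem (by simp), Set.indicator_of_notMem (by simp)]
        simp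
      rw [this, zero_mul]
    refine Filter.eventuallyEq_of_mem (by rwa [mem_ae_iff]) ?_
    rintro ⟨x, y⟩ hx
    simp only [Set.mem_prod, Set.mem_univ, and_true, Set.mem_insert_iff,
      Set.mem_singleton_iff] at hx
    by_cases hmem : (x, y) ∈ (({(1 : G)} : Set G) ×ˢ (Set.univ : Set G))
    · have hx1 : x = 1 := Set.mem_singleton_iff.mp hmem.1
      rw [hg, Set.piecewise_eq_of_mem _ _ _ hmem]
      simp [hx1]
    · have hxa : x = a := by
        rcases hx with hx | hx
        · exact absurd (by simp [hx]) hmem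
        · exact hx
      rw [hg, Set.piecewise_eq_of_notMem _ _ _ hmem]
      simp [hxa]
  have hg1 : ∀ y : G, g (1, y) = y :=
    fun y => Set.piecewise_eq_of_mem _ _ _ (by simp)
  have hga : ∀ y : G, g (a, y) ∈ B ↔ y ∈ B := by
    intro y
    by_cases ha1 : a = 1
    · rw [show g (a, y) = y by rw [ha1]; exact hg1 y]
    · rw [show g (a, y) = a * y from
        Set.piecewise_eq_of_notMem _ _ _ (by simp [Ne.symm ha1, ha1])]
      exact hBa y
  unfold Measure.mconv
  rw [Measure.map_congr hmul_ae, Measure.map_apply hgm hB,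
    Measure.prod_apply (hgm hB)]
  rw [hμ', lintegral_add_measure, lintegral_smul_measure, lintegral_smul_measure,
    lintegral_dirac, lintegral_dirac]
  have e1 : (Prod.mk (1 : G) ⁻¹' (g ⁻¹' B)) = B := by
    ext y; simp only [Set.mem_preimage]; rw [hg1 y]
  have e2 : (Prod.mk a ⁻¹' (g ⁻¹' B)) = B := by
    ext y; simp only [Set.mem_preimage]; exact hga y
  rw [e1, e2, smul_eq_mul, smul_eq_mul, ← add_mul, hsum, one_mul]

end aux

/-- If `a ≠ e`, `a² = e`, `μ = α₀ δ_e + α₁ δ_a` with `α₀, α₁ > 0`, `α₀ + α₁ = 1`, and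
`ν ∈ P(G)` satisfies `μ ∗ₘ ν ∗ₘ μ = μ`, then `supp(ν) ⊆ {e, a}` and consequently
`ν = β₀ δ_e + β₁ δ_a` with `β₀ + β₁ = 1`. -/
theorem generalized_inverse_supported_on_pair {G : Type*} [Group G] [TopologicalSpace G]
    [IsTopologicalGroup G] [CompactSpace G] [T2Space G] [MeasurableSpace G] [BorelSpace G]
    (a : G) (ha : a ≠ 1) (ha2 : a ^ 2 = 1)
    (α₀ α₁ : ℝ≥0∞) (h0 : 0 < α₀) (h1 : 0 < α₁) (hsum : α₀ + α₁ = 1)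
    (μ : Measure G)
    (hμ : μ = α₀ • Measure.dirac (1 : G) + α₁ • Measure.dirac a)
    (ν : Measure G) (hν : IsProbabilityMeasure ν) (hνr : ν.Regular)
    (h : (μ ∗ₘ ν) ∗ₘ μ = μ) :
    measSupport ν ⊆ {1, a} ∧
      ∃ β₀ β₁ : ℝ≥0∞, β₀ + β₁ = 1 ∧
        ν = β₀ • Measure.dirac (1 : G) + β₁ • Measure.dirac a := by
  subst hμ
  have haa : a * a = 1 := by rw [← sq]; exact ha2
  have hinv : a⁻¹ = a := inv_eq_of_mul_eq_one_right haa
  set S : Set G := {1, a} with hSdef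
  have hSm : MeasurableSet S := (measurableSet_singleton a).insert 1
  have hBm : MeasurableSet Sᶜ := hSm.compl
  have hr1 : ∀ x : G, x * a = 1 ↔ x = a := fun x => by
    rw [mul_eq_one_iff_eq_inv, hinv]
  have hl1 : ∀ x : G, a * x = 1 ↔ x = a := fun x => by
    rw [mul_eq_one_iff_inv_eq, hinv, eq_comm]
  have hSr : ∀ x : G, x * a ∈ S ↔ x ∈ S := fun x => by
    simp only [hSdef, Set.mem_insert_iff, Set.mem_singleton_iff, hr1 x,
      mul_eq_right]
    tauto
  have hSl : ∀ x : G, a * x ∈ S ↔ x ∈ S := fun x => by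
    simp only [hSdef, Set.mem_insert_iff, Set.mem_singleton_iff, hl1 x,
      mul_eq_left]
    tauto
  have hBr : ∀ x : G, x * a ∈ Sᶜ ↔ x ∈ Sᶜ := fun x => not_congr (hSr x)
  have hBl : ∀ x : G, a * x ∈ Sᶜ ↔ x ∈ Sᶜ := fun x => not_congr (hSl x)
  haveI : IsProbabilityMeasure (α₀ • Measure.dirac (1 : G) + α₁ • Measure.dirac a) :=
    ⟨by simp [hsum]⟩
  have hν0 : ν Sᶜ = 0 := by
    have e1 : (((α₀ • Measure.dirac (1 : G) + α₁ • Measure.dirac a) ∗ₘ ν)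
        ∗ₘ (α₀ • Measure.dirac (1 : G) + α₁ • Measure.dirac a)) Sᶜ
        = ((α₀ • Measure.dirac (1 : G) + α₁ • Measure.dirac a) ∗ₘ ν) Sᶜ :=
      aux_mconv_right a α₀ α₁ hsum _ hBm hBr
    have e2 : ((α₀ • Measure.dirac (1 : G) + α₁ • Measure.dirac a) ∗ₘ ν) Sᶜ = ν Sᶜ :=
      aux_mconv_left a α₀ α₁ hsum ν hBm hBl
    have e3 : (α₀ • Measure.dirac (1 : G) + α₁ • Measure.dirac a) Sᶜ = 0 := by
      rw [Measure.add_apply, Measure.smul_apply, Measure.smul_apply,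
        Measure.dirac_apply' _ hBm, Measure.dirac_apply' _ hBm,
        Set.indicator_of_notMem (by simp [hSdef]),
        Set.indicator_of_notMem (by simp [hSdef])]
      simp
    calc ν Sᶜ = ((α₀ • Measure.dirac (1 : G) + α₁ • Measure.dirac a) ∗ₘ ν) Sᶜ := e2.symm
      _ = (((α₀ • Measure.dirac (1 : G) + α₁ • Measure.dirac a) ∗ₘ ν)
            ∗ₘ (α₀ • Measure.dirac (1 : G) + α₁ • Measure.dirac a)) Sᶜ := e1.symm
      _ = (α₀ • Measure.dirac (1 : G) + α₁ • Measure.dirac a) Sᶜ := by rw [h]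
      _ = 0 := e3
  constructor
  · intro x hx
    by_contra hxS
    have hSclosed : IsClosed S :=
      ((Set.finite_singleton a).insert 1).isClosed
    have := hx Sᶜ hSclosed.isOpen_compl hxS
    rw [hν0] at this
    exact lt_irrefl 0 this
  · refine ⟨ν {1}, ν {a}, ?_, ?_⟩
    · have hc := measure_add_measure_compl (μ := ν) hSm
      rw [hν0, add_zero, measure_univ] at hc
      have hdisj : Disjoint ({1} : Set G) {a} :=
        Set.disjoint_singleton.mpr (Ne.symm ha)
      have hS12 : ν S = ν {1} + ν {a} := by
        rw [hSdef, Set.insert_eq, measure_union hdisj (measurableSet_singleton a)]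
      rw [← hS12, hc]
    · ext s hs
      have hdiff : ν (s \ S) = 0 :=
        measure_mono_null (fun y hy => hy.2) hν0
      have hsplit : ν s = ν (s ∩ S) := by
        have h' := measure_inter_add_diff (μ := ν) s hSm
        rw [← h', hdiff, add_zero]
      have hins : s ∩ S = (s ∩ {1}) ∪ (s ∩ {a}) := by
        rw [hSdef, Set.insert_eq, Set.inter_union_distrib_left]
      have hdisj2 : Disjoint (s ∩ {1}) (s ∩ {a}) :=
        (Set.disjoint_singleton.mpr (Ne.symm ha)).mono Set.inter_subset_right
          Set.inter_subset_right
      have hsum2 : ν (s ∩ S) = ν (s ∩ {1}) + ν (s ∩ {a}) := by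
        rw [hins, measure_union hdisj2 (hs.inter (measurableSet_singleton a))]
      have hd1 : ν (s ∩ {1}) = ν {1} * Measure.dirac (1 : G) s := by
        rw [Measure.dirac_apply' _ hs]
        by_cases h1s : (1 : G) ∈ s
        · rw [Set.inter_eq_right.mpr (Set.singleton_subset_iff.mpr h1s),
            Set.indicator_of_mem h1s]
          simp
        · rw [Set.indicator_of_notMem h1s]
          have he : s ∩ {1} = ∅ := by
            ext y
            simp only [Set.mem_inter_iff, Set.mem_singleton_iff, Set.mem_empty_iff_false,
              iff_false, not_and]
            rintro hy rfl; exact h1s hy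
          simp [he]
      have hda : ν (s ∩ {a}) = ν {a} * Measure.dirac a s := by
        rw [Measure.dirac_apply' _ hs]
        by_cases has : a ∈ s
        · rw [Set.inter_eq_right.mpr (Set.singleton_subset_iff.mpr has),
            Set.indicator_of_mem has]
          simp
        · rw [Set.indicator_of_notMem has]
          have he : s ∩ {a} = ∅ := by
            ext y
            simp only [Set.mem_inter_iff, Set.mem_singleton_iff, Set.mem_empty_iff_false,
              iff_false, not_and]
            rintro hy rfl; exact has hy
          simp [he]
      rw [hsplit, hsum2, hd1, hda]
      simp [Measure.add_apply, Measure.smul_apply]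
end

section
/- Let G = {g₀ = e, g₁, …, gₙ} be a finite abelian group with n ≥ 1 in which every element satisfies g² = e, and let μ = Σ_{k=0}^{n} α_k δ_{g_k} with all α_k > 0 and Σ_k α_k = 1. Let A be the (n+1) × (n+1) real matrix with entries A_{jk} = α_{S_j(k)}, where S_j is the permutation of {0,1,…,n} determined by g_j g_k = g_{S_j(k)}. If A is invertible, then μ has no generalized inverse in P(G): there is no probability measure ν on G with μ ∗ ν ∗ μ = μ. -/
open MeasureTheory
open scoped MeasureTheory ENNReal

lemma conv_singleton {G : Type*} [CommGroup G] [Fintype G] [MeasurableSpace G]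
    [MeasurableSingletonClass G]
    (μ ν : Measure G) [SFinite μ] [SFinite ν] (g : G) :
    (μ ∗ₘ ν) {g} = ∫⁻ x, ν {x⁻¹ * g} ∂μ := by
  have hm : Measurable (fun p : G × G => p.1 * p.2) := measurable_of_countable _
  rw [Measure.mconv, Measure.map_apply hm (measurableSet_singleton g),
    Measure.prod_apply (hm (measurableSet_singleton g))]
  congr 1; ext x; congr 1; ext y; simp [eq_inv_mul_iff_mul_eq]


/-- Let `G = {g₀ = e, g₁, …, gₙ}` (`n ≥ 1`) be a finite abelian group in which every
element satisfies `g² = e`, and let `μ = ∑ α_k δ_{g_k}` with all `α_k > 0` summing to `1`.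
Let `A` be the matrix with entries `A j k = α_{S_j(k)}` where `g_j g_k = g_{S_j(k)}`.
If `A` is invertible, then `μ` has no generalized inverse in `P(G)`. -/
theorem invertible_matrix_obstruction {G : Type*} [CommGroup G] [Fintype G]
    [MeasurableSpace G] [MeasurableSingletonClass G]
    (hsq : ∀ x : G, x ^ 2 = 1) (n : ℕ) (hn : 1 ≤ n)
    (e : Fin (n + 1) ≃ G) (he : e 0 = 1)
    (α : Fin (n + 1) → ℝ) (hα : ∀ k, 0 < α k) (hsum : ∑ k, α k = 1)
    (μ : Measure G)
    (hμ : μ = ∑ k, ENNReal.ofReal (α k) • Measure.dirac (e k))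
    (A : Matrix (Fin (n + 1)) (Fin (n + 1)) ℝ)
    (hA : ∀ j k, A j k = α (e.symm (e j * e k)))
    (hinv : IsUnit A.det) :
    ¬ ∃ ν : Measure G, IsProbabilityMeasure ν ∧ (μ ∗ₘ ν) ∗ₘ μ = μ := by
  rintro ⟨ν, hν, heq⟩
  have hself : ∀ x : G, x⁻¹ = x := by
    intro x; rw [inv_eq_iff_mul_eq_one, ← sq, hsq]
  have hμs : ∀ g : G, μ {g} = ENNReal.ofReal (α (e.symm g)) := by
    intro g
    rw [hμ]
    simp only [Measure.coe_finset_sum, Finset.sum_apply, Measure.smul_apply, smul_eq_mul,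
      Measure.dirac_apply' _ (measurableSet_singleton g)]
    rw [Finset.sum_eq_single (e.symm g)]
    · simp
    · intro k _ hk
      have : e k ≠ g := fun h => hk (by simp [← h])
      simp [Set.indicator, this]
    · simp
  have hfin : IsFiniteMeasure μ := by
    constructor
    rw [hμ]
    simp only [Measure.coe_finset_sum, Finset.sum_apply, Measure.smul_apply, smul_eq_mul,
      measure_univ]
    exact ENNReal.sum_lt_top.2 fun k _ => by simp [ENNReal.mul_lt_top, ENNReal.ofReal_lt_top]
  have hμl : ∀ f : G → ℝ≥0∞, ∫⁻ x, f x ∂μ = ∑ k, ENNReal.ofReal (α k) * f (e k) := by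
    intro f
    rw [hμ, lintegral_finset_sum_measure]
    congr 1; ext k
    rw [lintegral_smul_measure, lintegral_dirac' _ (measurable_of_countable f), smul_eq_mul]
  set β : Fin (n + 1) → ℝ := fun k => (ν {e k}).toReal with hβ
  have hβ0 : ∀ k, 0 ≤ β k := fun k => ENNReal.toReal_nonneg
  have hνfin : ∀ s : Set G, ν s ≠ ⊤ := fun s => measure_ne_top ν s
  have hβsum : ∑ k, β k = 1 := by
    have h1 : ∑ k, ν {e k} = 1 := by
      rw [Equiv.sum_comp e (fun g => ν {g}), ← measure_univ (μ := ν), ← lintegral_one,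
        lintegral_fintype]
      simp
    have := congrArg ENNReal.toReal h1
    rw [ENNReal.toReal_sum (fun k _ => hνfin _)] at this
    simpa using this
  -- masses of μ ∗ ν
  have hconvfin : ∀ s : Set G, (μ ∗ₘ ν) s ≠ ⊤ := fun s => measure_ne_top _ s
  have hconv : ∀ j, ((μ ∗ₘ ν) {e j}).toReal = A.mulVec β j := by
    intro j
    rw [conv_singleton, hμl]
    rw [ENNReal.toReal_sum (fun k _ => ENNReal.mul_ne_top ENNReal.ofReal_ne_top (hνfin _))]
    simp only [ENNReal.toReal_mul, ENNReal.toReal_ofReal (le_of_lt (hα _)), hself]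
    have hT : ∀ k : Fin (n+1), e.symm (e (e.symm (e k * e j)) * e j) = k := by
      intro k; simp [mul_assoc, ← sq, hsq]
    let T : Equiv.Perm (Fin (n + 1)) :=
      ⟨fun k => e.symm (e k * e j), fun k => e.symm (e k * e j), hT, hT⟩
    have := Equiv.sum_comp T (fun k => α (T k) * β k)
    simp only [T, Equiv.coe_fn_mk, hT] at this
    calc ∑ x, α x * (ν {e x * e j}).toReal
        = ∑ x, α x * β (e.symm (e x * e j)) := by
          apply Finset.sum_congr rfl; intro x _; simp [hβ]
      _ = ∑ x, α (e.symm (e x * e j)) * β x := this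
      _ = A.mulVec β j := by
          simp only [Matrix.mulVec, dotProduct, hA, mul_comm (e j)]
  -- masses of (μ ∗ ν) ∗ μ
  have hconv2 : ∀ j, (((μ ∗ₘ ν) ∗ₘ μ) {e j}).toReal = A.mulVec (A.mulVec β) j := by
    intro j
    rw [conv_singleton, lintegral_fintype, ← Equiv.sum_comp e
      (fun x => μ {x⁻¹ * e j} * (μ ∗ₘ ν) {x})]
    rw [ENNReal.toReal_sum (fun k _ => ENNReal.mul_ne_top (measure_ne_top μ _) (hconvfin _))]
    simp only [ENNReal.toReal_mul, hself, hμs, ENNReal.toReal_ofReal (le_of_lt (hα _)), hconv]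
    simp only [Matrix.mulVec, dotProduct, hA, mul_comm (e j)]
  -- the main vector equation
  have hvec : A.mulVec (A.mulVec β) = A.mulVec (Pi.single 0 1) := by
    funext j
    rw [← hconv2 j, heq, hμs]
    simp only [Equiv.symm_apply_apply, ENNReal.toReal_ofReal (le_of_lt (hα _))]
    rw [Matrix.mulVec_single]
    simp [hA, he]
  have h2 : ∀ v : Fin (n + 1) → ℝ, A⁻¹.mulVec (A.mulVec v) = v := by
    intro v
    rw [Matrix.mulVec_mulVec, Matrix.nonsing_inv_mul A hinv, Matrix.one_mulVec]
  have hinj : A.mulVec β = Pi.single 0 1 := by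
    rw [← h2 (A.mulVec β), hvec, h2]
  -- contradiction at index 1
  have h10 : (1 : Fin (n + 1)) ≠ 0 := by
    have : (1 : ℕ) < n + 1 := by omega
    simp [Fin.ext_iff, Fin.val_one, Nat.mod_eq_of_lt this]
  have hz : A.mulVec β 1 = 0 := by rw [hinj]; simp [Pi.single_eq_of_ne h10]
  have hpos : 0 < A.mulVec β 1 := by
    simp only [Matrix.mulVec, dotProduct]
    obtain ⟨k, hk⟩ : ∃ k, 0 < β k := by
      by_contra h
      push_neg at h
      have : ∑ k, β k = 0 := le_antisymm (Finset.sum_nonpos fun k _ => h k)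
        (Finset.sum_nonneg fun k _ => hβ0 k)
      rw [hβsum] at this; norm_num at this
    refine Finset.sum_pos' (fun i _ => mul_nonneg (le_of_lt (by rw [hA]; exact hα _)) (hβ0 i))
      ⟨k, Finset.mem_univ k, mul_pos (by rw [hA]; exact hα _) hk⟩
  rw [hz] at hpos
  exact lt_irrefl 0 hpos
end

section
/- (Wendel) Let G be a compact Hausdorff topological group. A regular Borel probability measure μ on G is invertible in the convolution semigroup P(G) (i.e., there exists ν ∈ P(G) with μ ∗ ν = ν ∗ μ = δ_e) if and only if μ = δ_g for some g ∈ G. -/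
open MeasureTheory
open scoped MeasureTheory ENNReal

/-- In a compact space, a probability measure has a point all of whose open
neighborhoods have positive measure. -/
lemma exists_support_point {G : Type*} [TopologicalSpace G] [CompactSpace G]
    [MeasurableSpace G] (μ : Measure G) (hμ : IsProbabilityMeasure μ) :
    ∃ x : G, ∀ U : Set G, IsOpen U → x ∈ U → μ U ≠ 0 := by
  by_contra h
  push_neg at h
  choose U hUopen hxU hU0 using h
  obtain ⟨t, ht⟩ := isCompact_univ.elim_finite_subcover U hUopen
    (fun x _ => Set.mem_iUnion.2 ⟨x, hxU x⟩)
  have : μ Set.univ = 0 := by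
    refine le_antisymm ?_ zero_le
    calc μ Set.univ ≤ μ (⋃ i ∈ t, U i) := measure_mono ht
    _ ≤ ∑ i ∈ t, μ (U i) := measure_biUnion_finset_le t U
    _ = 0 := by simp [hU0]
  simp [hμ.measure_univ] at this

/-- A probability measure which gives every point other than `g` an open null
neighborhood is the Dirac measure at `g`. -/
lemma eq_dirac_of_null_nhds {G : Type*} [TopologicalSpace G] [CompactSpace G] [T2Space G]
    [MeasurableSpace G] [BorelSpace G] (μ : Measure G) (hμ : IsProbabilityMeasure μ)
    (hμr : μ.Regular) (g : G)
    (hnull : ∀ x : G, x ≠ g → ∃ U : Set G, IsOpen U ∧ x ∈ U ∧ μ U = 0) :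
    μ = Measure.dirac g := by
  have hcompl : μ ({g}ᶜ) = 0 := by
    have hopen : IsOpen ({g}ᶜ : Set G) := isOpen_compl_singleton
    by_contra h0
    have hpos : 0 < μ ({g}ᶜ) := pos_iff_ne_zero.mpr h0
    obtain ⟨K, hKsub, hK, hKpos⟩ := hμr.innerRegular hopen 0 hpos
    have hK0 : μ K ≤ 0 := ?_
    · exact absurd hK0 (not_le.mpr hKpos)
    choose U hUopen hxU hU0 using fun (x : K) => hnull x (hKsub x.2)
    have hcover : K ⊆ ⋃ x : K, U x := fun x hx =>
      Set.mem_iUnion.2 ⟨⟨x, hx⟩, hxU ⟨x, hx⟩⟩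
    obtain ⟨t, ht⟩ := hK.elim_finite_subcover U hUopen hcover
    calc μ K ≤ μ (⋃ i ∈ t, U i) := measure_mono ht
    _ ≤ ∑ i ∈ t, μ (U i) := measure_biUnion_finset_le t U
    _ = 0 := by simp [hU0]
  have hg : μ {g} = 1 := by
    have := measure_add_measure_compl (μ := μ) (measurableSet_singleton g)
    rw [hcompl, add_zero, hμ.measure_univ] at this
    exact this
  ext s hs
  rw [Measure.dirac_apply' g hs]
  by_cases hgs : g ∈ s
  · have h1 : (1 : ℝ≥0∞) ≤ μ s := hg ▸ measure_mono (Set.singleton_subset_iff.2 hgs)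
    have h2 : μ s ≤ 1 := prob_le_one
    simp [Set.indicator_of_mem hgs, le_antisymm h2 h1]
  · have hsub : s ⊆ {g}ᶜ := fun x hx => by
      simp only [Set.mem_compl_iff, Set.mem_singleton_iff]
      rintro rfl; exact hgs hx
    have : μ s = 0 :=
      le_antisymm ((measure_mono hsub).trans_eq hcompl) zero_le
    simp [Set.indicator_of_notMem hgs, this]

/-- If `μ ∗ ν = δ 1` then support points of `μ` and `ν` multiply to `1`. -/
lemma support_mul_eq_one {G : Type*} [Group G] [TopologicalSpace G]
    [IsTopologicalGroup G] [T2Space G] [MeasurableSpace G] [BorelSpace G]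
    {μ ν : Measure G} [SFinite μ] [SFinite ν]
    (hconv : μ ∗ₘ ν = Measure.dirac (1 : G))
    {x y : G} (hx : ∀ U : Set G, IsOpen U → x ∈ U → μ U ≠ 0)
    (hy : ∀ V : Set G, IsOpen V → y ∈ V → ν V ≠ 0) : x * y = 1 := by
  by_contra hne
  have haem : AEMeasurable (fun p : G × G => p.1 * p.2) (μ.prod ν) := by
    by_contra h
    have h0 : μ ∗ₘ ν = 0 := Measure.map_of_not_aemeasurable h
    rw [hconv] at h0
    exact (IsProbabilityMeasure.ne_zero (Measure.dirac (1 : G))) h0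
  have hW : IsOpen ({(1 : G)}ᶜ : Set G) := isOpen_compl_singleton
  have hmem : (fun p : G × G => p.1 * p.2) ⁻¹' ({(1 : G)}ᶜ) ∈ nhds (x, y) := by
    refine (continuous_mul.isOpen_preimage _ hW).mem_nhds ?_
    simpa using hne
  obtain ⟨U, V, hUopen, hxU, hVopen, hyV, hUV⟩ := mem_nhds_prod_iff'.1 hmem
  have hle : (μ.prod ν) (U ×ˢ V) ≤ (μ ∗ₘ ν) ({(1 : G)}ᶜ) :=
    calc (μ.prod ν) (U ×ˢ V)
        ≤ (μ.prod ν) ((fun p : G × G => p.1 * p.2) ⁻¹' ({(1 : G)}ᶜ)) :=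
          measure_mono hUV
    _ ≤ (μ ∗ₘ ν) ({(1 : G)}ᶜ) := Measure.le_map_apply haem _
  rw [hconv, Measure.dirac_apply, Set.indicator_of_notMem (by simp)] at hle
  rw [Measure.prod_prod] at hle
  rcases mul_eq_zero.1 (le_antisymm hle zero_le) with h | h
  · exact hx U hUopen hxU h
  · exact hy V hVopen hyV h

/-- The pushforward of a Dirac measure on the product under multiplication. -/
lemma map_mul_dirac {G : Type*} [Mul G] [MeasurableSpace G] [MeasurableSingletonClass G]
    (a b : G) :
    Measure.map (fun p : G × G => p.1 * p.2) (Measure.dirac (a, b)) =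
      Measure.dirac (a * b) := by
  have hae : (fun p : G × G => p.1 * p.2) =ᵐ[Measure.dirac (a, b)]
      (fun _ => a * b) := by
    rw [Filter.EventuallyEq, ae_iff]
    rw [Measure.dirac_apply]
    simp
  have haem : AEMeasurable (fun p : G × G => p.1 * p.2) (Measure.dirac (a, b)) :=
    (measurable_const (a := a * b)).aemeasurable.congr hae.symm
  ext s hs
  rw [Measure.map_apply_of_aemeasurable haem hs, Measure.dirac_apply' _ hs,
    Measure.dirac_apply]
  by_cases hmem : a * b ∈ s
  · rw [Set.indicator_of_mem hmem, Set.indicator_of_mem (show (a, b) ∈ _ from hmem)]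
    rfl
  · rw [Set.indicator_of_notMem hmem, Set.indicator_of_notMem (show (a, b) ∉ _ from hmem)]

/-- Dirac measures are regular on a compact T1 space. -/
lemma dirac_regular {G : Type*} [TopologicalSpace G] [T1Space G] [CompactSpace G]
    [MeasurableSpace G] [OpensMeasurableSpace G] (a : G) :
    (Measure.dirac a).Regular := by
  have hOuter : (Measure.dirac a).OuterRegular := by
    constructor
    intro A hA r hr
    by_cases haA : a ∈ A
    · refine ⟨Set.univ, Set.subset_univ A, isOpen_univ, ?_⟩
      rw [Measure.dirac_apply, Set.indicator_of_mem haA] at hr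
      rw [Measure.dirac_apply, Set.indicator_of_mem (Set.mem_univ a)]
      exact hr
    · refine ⟨{a}ᶜ, fun x hx => ?_, isOpen_compl_singleton, ?_⟩
      · simp only [Set.mem_compl_iff, Set.mem_singleton_iff]
        rintro rfl; exact haA hx
      · rw [Measure.dirac_apply, Set.indicator_of_notMem (by simp)]
        rw [Measure.dirac_apply, Set.indicator_of_notMem haA] at hr
        exact hr
  refine { toOuterRegular := hOuter, innerRegular := ?_ }
  intro U hU r hr
  by_cases haU : a ∈ U
  · refine ⟨{a}, Set.singleton_subset_iff.2 haU, isCompact_singleton, ?_⟩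
    rw [Measure.dirac_apply, Set.indicator_of_mem haU] at hr
    rw [Measure.dirac_apply, Set.indicator_of_mem (Set.mem_singleton a)]
    exact hr
  · rw [Measure.dirac_apply, Set.indicator_of_notMem haU] at hr
    exact absurd hr (by simp)

/-- (Wendel) A regular Borel probability measure `μ` on a compact Hausdorff topological
group `G` is invertible in the convolution semigroup `P(G)` if and only if `μ` is a Dirac
measure `δ_g` for some `g ∈ G`. -/
theorem wendel_invertible_iff_dirac {G : Type*} [Group G] [TopologicalSpace G]
    [IsTopologicalGroup G] [CompactSpace G] [T2Space G] [MeasurableSpace G] [BorelSpace G]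
    (μ : Measure G) (hμ : IsProbabilityMeasure μ) (hμr : μ.Regular) :
    (∃ ν : Measure G, IsProbabilityMeasure ν ∧ ν.Regular ∧
        μ ∗ₘ ν = Measure.dirac (1 : G) ∧ ν ∗ₘ μ = Measure.dirac (1 : G)) ↔
      ∃ g : G, μ = Measure.dirac g := by
  constructor
  · rintro ⟨ν, hν, hνr, hμν, hνμ⟩
    obtain ⟨y, hy⟩ := exists_support_point ν hν
    refine ⟨y⁻¹, eq_dirac_of_null_nhds μ hμ hμr y⁻¹ ?_⟩
    intro x hxne
    by_contra h
    push_neg at h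
    have hx : ∀ U : Set G, IsOpen U → x ∈ U → μ U ≠ 0 := fun U hU hxU h0 =>
      (h U hU hxU h0).elim
    have hxy : x * y = 1 := support_mul_eq_one hμν hx hy
    exact hxne (mul_eq_one_iff_eq_inv.mp hxy)
  · rintro ⟨g, rfl⟩
    refine ⟨Measure.dirac g⁻¹, inferInstance, dirac_regular g⁻¹, ?_, ?_⟩
    · show Measure.map _ _ = _
      rw [Measure.dirac_prod_dirac, map_mul_dirac, mul_inv_cancel]
    · show Measure.map _ _ = _
      rw [Measure.dirac_prod_dirac, map_mul_dirac, inv_mul_cancel]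
end
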